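/- arXiv:2108.13758 — 6 statements merged into one kernel-verified Lean document; each statement's English description precedes it below -/
import Mathlib

section
/- Let 0 < μ < 1 and let z : [a,b] → ℝ be continuously differentiable. Then for every ℓ ∈ [a,b], the Φ-Riemann–Liouville fractional integral of order μ of the Φ-Caputo fractional derivative of order μ of z satisfies I^{μ;Φ}(ᶜD^{μ;Φ}z)(ℓ) = z(ℓ) − z(a). -/
open Real MeasureTheory Set intervalIntegral

lemma betaKer_intervalIntegrable {μ : ℝ} (h0 : 0 < μ) (h1 : μ < 1) (p q : ℝ) (hpq : p ≤ q) :
    IntervalIntegrable (fun u => (q - u) ^ (μ - 1) * (u - p) ^ (-μ)) volume p q := by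
  rcases eq_or_lt_of_le hpq with rfl | hpq
  · rw [intervalIntegrable_iff]; simp
  set r := (p + q) / 2 with hr
  have hpr : p < r := by rw [hr]; linarith
  have hrq : r < q := by rw [hr]; linarith
  have base1 : IntervalIntegrable (fun u : ℝ => (u - p) ^ (-μ)) volume p r := by
    have h := (intervalIntegrable_rpow' (a := 0) (b := r - p)
      (show (-1:ℝ) < -μ by linarith)).comp_sub_right p
    simpa using h
  have cont1 : ContinuousOn (fun u : ℝ => (q - u) ^ (μ - 1)) (Set.uIcc p r) := by
    apply ContinuousOn.rpow_const (by fun_prop)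
    intro x hx
    rw [Set.uIcc_of_le hpr.le] at hx
    exact Or.inl (ne_of_gt (by linarith [hx.2]))
  have part1 : IntervalIntegrable (fun u => (q - u) ^ (μ - 1) * (u - p) ^ (-μ)) volume p r :=
    base1.continuousOn_mul cont1
  have base2 : IntervalIntegrable (fun u : ℝ => (q - u) ^ (μ - 1)) volume r q := by
    have h := (intervalIntegrable_rpow' (a := 0) (b := q - r)
      (show (-1:ℝ) < μ - 1 by linarith)).comp_sub_left q
    simpa using h.symm
  have cont2 : ContinuousOn (fun u : ℝ => (u - p) ^ (-μ)) (Set.uIcc r q) := by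
    apply ContinuousOn.rpow_const (by fun_prop)
    intro x hx
    rw [Set.uIcc_of_le hrq.le] at hx
    exact Or.inl (ne_of_gt (by linarith [hx.1]))
  have part2 : IntervalIntegrable (fun u => (q - u) ^ (μ - 1) * (u - p) ^ (-μ)) volume r q :=
    base2.mul_continuousOn cont2
  exact part1.trans part2

lemma betaKer_integral {μ : ℝ} (h0 : 0 < μ) (h1 : μ < 1) {p q : ℝ} (hpq : p < q) :
    ∫ u in p..q, (q - u) ^ (μ - 1) * (u - p) ^ (-μ) = Real.Gamma μ * Real.Gamma (1 - μ) := by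
  have hd : 0 < q - p := by linarith
  have hshift : (∫ u in p..q, (q - u) ^ (μ - 1) * (u - p) ^ (-μ))
      = ∫ x in (0:ℝ)..(q - p), (q - p - x) ^ (μ - 1) * x ^ (-μ) := by
    have h := intervalIntegral.integral_comp_add_right (a := 0) (b := q - p)
      (fun u => (q - u) ^ (μ - 1) * (u - p) ^ (-μ)) p
    simp only [zero_add, sub_add_cancel] at h
    rw [← h]
    congr 1
    ext x
    have e1 : q - (x + p) = q - p - x := by ring
    have e2 : x + p - p = x := by ring
    rw [e1, e2]
  rw [hshift]
  set d := q - p with hdd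
  set I : ℝ := ∫ x in (0:ℝ)..d, (d - x) ^ (μ - 1) * x ^ (-μ) with hI
  have key : (I : ℂ) = ((Real.Gamma μ * Real.Gamma (1 - μ) : ℝ) : ℂ) := by
    rw [hI, ← intervalIntegral.integral_ofReal]
    have hb := Complex.betaIntegral_scaled (1 - (μ:ℂ)) (μ:ℂ) hd
    have hexp0 : (1 - (μ:ℂ)) + (μ:ℂ) - 1 = 0 := by ring
    rw [hexp0, Complex.cpow_zero, one_mul] at hb
    have hcongr : (∫ x in (0:ℝ)..d, (((d - x) ^ (μ - 1) * x ^ (-μ) : ℝ) : ℂ))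
        = ∫ x in (0:ℝ)..d, (x:ℂ) ^ ((1 - (μ:ℂ)) - 1) * ((d:ℂ) - x) ^ ((μ:ℂ) - 1) := by
      refine intervalIntegral.integral_congr fun x hx => ?_
      rw [Set.uIcc_of_le hd.le] at hx
      rw [Complex.ofReal_mul, Complex.ofReal_cpow (by linarith [hx.2] : (0:ℝ) ≤ d - x),
        Complex.ofReal_cpow hx.1]
      have e1 : (1 - (μ:ℂ)) - 1 = ((-μ : ℝ) : ℂ) := by push_cast; ring
      have e2 : ((μ - 1 : ℝ) : ℂ) = (μ:ℂ) - 1 := by push_cast; ring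
      have e3 : ((d - x : ℝ) : ℂ) = (d:ℂ) - x := by push_cast; ring
      rw [e1, e2, e3, mul_comm]
    rw [hcongr, hb]
    have hg := Complex.Gamma_mul_Gamma_eq_betaIntegral
      (s := 1 - (μ:ℂ)) (t := (μ:ℂ)) (by simp; linarith) (by simpa using h0)
    have h1' : (1 - (μ:ℂ)) + (μ:ℂ) = 1 := by ring
    rw [h1', Complex.Gamma_one, one_mul] at hg
    rw [← hg]
    have c1 : (1 - (μ:ℂ)) = ((1 - μ : ℝ) : ℂ) := by push_cast; ring
    rw [c1, Complex.Gamma_ofReal, Complex.Gamma_ofReal]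
    push_cast
    ring
  exact_mod_cast key

/-- For `0 < μ < 1` and `z` continuously differentiable on `[a,b]`,
the Φ-Riemann–Liouville fractional integral of order μ of the Φ-Caputo
fractional derivative of order μ of z satisfies
`I^{μ;Φ}(ᶜD^{μ;Φ}z)(ℓ) = z(ℓ) − z(a)` for every `ℓ ∈ [a,b]`. -/
theorem rl_integral_of_caputo_deriv
    (a b : ℝ) (hab : a < b)
    (Φ Φ' : ℝ → ℝ)
    (hΦd : ∀ x ∈ Icc a b, HasDerivAt Φ (Φ' x) x)
    (hΦ'c : ContinuousOn Φ' (Icc a b))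
    (hΦ'pos : ∀ x ∈ Icc a b, 0 < Φ' x)
    (μ : ℝ) (hμ0 : 0 < μ) (hμ1 : μ < 1)
    (z z' : ℝ → ℝ)
    (hzd : ∀ x ∈ Icc a b, HasDerivAt z (z' x) x)
    (hz'c : ContinuousOn z' (Icc a b)) :
    ∀ ℓ ∈ Icc a b,
      (1 / Real.Gamma μ) *
        (∫ ρ in a..ℓ, Φ' ρ * (Φ ℓ - Φ ρ) ^ (μ - 1) *
          ((1 / Real.Gamma (1 - μ)) * ∫ σ in a..ρ, (Φ ρ - Φ σ) ^ (-μ) * z' σ))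
      = z ℓ - z a := by
  -- basic continuity
  have hΦc : ContinuousOn Φ (Icc a b) := fun x hx => ((hΦd x hx).continuousAt).continuousWithinAt
  have hne : (Icc a b).Nonempty := nonempty_Icc.2 hab.le
  obtain ⟨xm, hxm, hminOn⟩ := isCompact_Icc.exists_isMinOn hne hΦ'c
  set m := Φ' xm with hm_def
  have hm : 0 < m := hΦ'pos xm hxm
  have hmle : ∀ x ∈ Icc a b, m ≤ Φ' x := fun x hx => isMinOn_iff.1 hminOn x hx
  obtain ⟨xM, hxM, hmaxOn⟩ := isCompact_Icc.exists_isMaxOn hne hΦ'c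
  set MΦ := Φ' xM with hMΦ_def
  have hMΦpos : 0 < MΦ := hΦ'pos xM hxM
  have hMle : ∀ x ∈ Icc a b, Φ' x ≤ MΦ := fun x hx => isMaxOn_iff.1 hmaxOn x hx
  obtain ⟨xz, hxz, hzmaxOn⟩ := isCompact_Icc.exists_isMaxOn hne hz'c.norm
  set Mz := |z' xz| with hMz_def
  have hMzle : ∀ x ∈ Icc a b, |z' x| ≤ Mz := by
    intro x hx
    have := isMaxOn_iff.1 hzmaxOn x hx
    simpa [Real.norm_eq_abs] using this
  have hMz0 : 0 ≤ Mz := abs_nonneg _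
  -- increments of Φ
  have hincr : ∀ x ∈ Icc a b, ∀ y ∈ Icc a b, x ≤ y → m * (y - x) ≤ Φ y - Φ x := by
    intro x hx y hy hxy
    have hsub : uIcc x y ⊆ Icc a b := by
      rw [uIcc_of_le hxy]; exact Icc_subset_Icc hx.1 hy.2
    have hftc : ∫ t in x..y, Φ' t = Φ y - Φ x :=
      intervalIntegral.integral_eq_sub_of_hasDerivAt (fun t ht => hΦd t (hsub ht))
        ((hΦ'c.mono hsub).intervalIntegrable)
    rw [← hftc]
    have h2 : m * (y - x) = ∫ _t in x..y, m := by
      rw [intervalIntegral.integral_const, smul_eq_mul]; ring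
    rw [h2]
    refine intervalIntegral.integral_mono_on hxy intervalIntegrable_const
      ((hΦ'c.mono hsub).intervalIntegrable) (fun t ht => hmle t ?_)
    exact hsub (by rwa [uIcc_of_le hxy])
  have hmono : ∀ x ∈ Icc a b, ∀ y ∈ Icc a b, x ≤ y → Φ x ≤ Φ y := by
    intro x hx y hy hxy
    nlinarith [hincr x hx y hy hxy]
  have hstrict : ∀ x ∈ Icc a b, ∀ y ∈ Icc a b, x < y → Φ x < Φ y := by
    intro x hx y hy hxy
    nlinarith [hincr x hx y hy hxy.le]
  have hrpow_bd : ∀ (e : ℝ), e ≤ 0 → ∀ x ∈ Icc a b, ∀ y ∈ Icc a b, x < y →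
      (Φ y - Φ x) ^ e ≤ m ^ e * (y - x) ^ e := by
    intro e he x hx y hy hxy
    have h1 : 0 < m * (y - x) := mul_pos hm (by linarith)
    calc (Φ y - Φ x) ^ e ≤ (m * (y - x)) ^ e :=
          Real.rpow_le_rpow_of_nonpos h1 (hincr x hx y hy hxy.le) he
      _ = m ^ e * (y - x) ^ e := Real.mul_rpow hm.le (by linarith)
  have hΓμ : 0 < Real.Gamma μ := Real.Gamma_pos_of_pos hμ0
  have hΓμ' : 0 < Real.Gamma (1 - μ) := Real.Gamma_pos_of_pos (by linarith)
  intro ℓ hℓ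
  rcases eq_or_lt_of_le hℓ.1 with rfl | hal
  · simp
  have hℓb : ℓ ≤ b := hℓ.2
  have hIccsub : Icc a ℓ ⊆ Icc a b := Icc_subset_Icc le_rfl hℓb
  set C : ℝ := MΦ * (m ^ (μ - 1) * m ^ (-μ)) with hC_def
  have hC0 : 0 < C := by positivity
  set K : ℝ → ℝ → ℝ := fun ρ σ => Φ' ρ * (Φ ℓ - Φ ρ) ^ (μ - 1) * ((Φ ρ - Φ σ) ^ (-μ) * z' σ)
    with hK_def
  set G : ℝ → ℝ → ℝ := fun ρ σ => if σ ≤ ρ then K ρ σ else 0 with hG_def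
  set S : Set ℝ := Ioo a ℓ with hS_def
  have hSmeas : MeasurableSet S := measurableSet_Ioo
  have hSsub : S ⊆ Icc a b := fun x hx => ⟨hx.1.le, hx.2.le.trans hℓb⟩
  -- master kernel bound
  have hker : ∀ ρ ∈ Icc a ℓ, ∀ σ ∈ Icc a b, σ ≤ ρ →
      Φ' ρ * ((Φ ℓ - Φ ρ) ^ (μ - 1) * (Φ ρ - Φ σ) ^ (-μ)) ≤
        C * ((ℓ - ρ) ^ (μ - 1) * (ρ - σ) ^ (-μ)) := by
    intro ρ hρ σ hσ hσρ
    have hρab : ρ ∈ Icc a b := hIccsub hρ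
    rcases eq_or_lt_of_le hσρ with rfl | hσρ'
    · simp [sub_self, Real.zero_rpow (show -μ ≠ 0 by linarith)]
    rcases eq_or_lt_of_le hρ.2 with rfl | hρℓ
    · simp [sub_self, Real.zero_rpow (show μ - 1 ≠ 0 by linarith)]
    · have A1 : Φ' ρ ≤ MΦ := hMle ρ hρab
      have A2 : (Φ ℓ - Φ ρ) ^ (μ - 1) ≤ m ^ (μ - 1) * (ℓ - ρ) ^ (μ - 1) :=
        hrpow_bd (μ - 1) (by linarith) ρ hρab ℓ hℓ hρℓ
      have A3 : (Φ ρ - Φ σ) ^ (-μ) ≤ m ^ (-μ) * (ρ - σ) ^ (-μ) :=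
        hrpow_bd (-μ) (by linarith) σ hσ ρ hρab hσρ'
      have hX0 : (0:ℝ) ≤ (Φ ρ - Φ σ) ^ (-μ) :=
        Real.rpow_nonneg (sub_nonneg.2 (hmono σ hσ ρ hρab hσρ)) _
      have hB0 : (0:ℝ) ≤ m ^ (μ - 1) * (ℓ - ρ) ^ (μ - 1) := by
        have h9 : (0:ℝ) ≤ ℓ - ρ := by linarith
        positivity
      have hXY : (Φ ℓ - Φ ρ) ^ (μ - 1) * (Φ ρ - Φ σ) ^ (-μ) ≤
          (m ^ (μ - 1) * (ℓ - ρ) ^ (μ - 1)) * (m ^ (-μ) * (ρ - σ) ^ (-μ)) :=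
        mul_le_mul A2 A3 hX0 hB0
      have hXY0 : 0 ≤ (Φ ℓ - Φ ρ) ^ (μ - 1) * (Φ ρ - Φ σ) ^ (-μ) :=
        mul_nonneg (Real.rpow_nonneg (sub_nonneg.2 (hmono ρ hρab ℓ hℓ hρ.2)) _) hX0
      calc Φ' ρ * ((Φ ℓ - Φ ρ) ^ (μ - 1) * (Φ ρ - Φ σ) ^ (-μ))
          ≤ MΦ * ((Φ ℓ - Φ ρ) ^ (μ - 1) * (Φ ρ - Φ σ) ^ (-μ)) :=
            mul_le_mul_of_nonneg_right A1 hXY0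
        _ ≤ MΦ * ((m ^ (μ - 1) * (ℓ - ρ) ^ (μ - 1)) * (m ^ (-μ) * (ρ - σ) ^ (-μ))) :=
            mul_le_mul_of_nonneg_left hXY hMΦpos.le
        _ = C * ((ℓ - ρ) ^ (μ - 1) * (ρ - σ) ^ (-μ)) := by rw [hC_def]; ring
  have hkernonneg : ∀ ρ ∈ Icc a ℓ, ∀ σ ∈ Icc a b, σ ≤ ρ →
      0 ≤ Φ' ρ * ((Φ ℓ - Φ ρ) ^ (μ - 1) * (Φ ρ - Φ σ) ^ (-μ)) := by
    intro ρ hρ σ hσ hσρ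
    have h1 : 0 ≤ Φ ℓ - Φ ρ := sub_nonneg.2 (hmono ρ (hIccsub hρ) ℓ hℓ hρ.2)
    have h2 : 0 ≤ Φ ρ - Φ σ := sub_nonneg.2 (hmono σ hσ ρ (hIccsub hρ) hσρ)
    have h3 := (hΦ'pos ρ (hIccsub hρ)).le
    positivity
  -- |K| bound
  have hKabs : ∀ ρ ∈ Icc a ℓ, ∀ σ ∈ Icc a b, σ ≤ ρ →
      |K ρ σ| = Φ' ρ * ((Φ ℓ - Φ ρ) ^ (μ - 1) * (Φ ρ - Φ σ) ^ (-μ)) * |z' σ| := by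
    intro ρ hρ σ hσ hσρ
    simp only [hK_def]
    rw [abs_mul, abs_mul, abs_mul]
    rw [abs_of_nonneg (hΦ'pos ρ (hIccsub hρ)).le,
        abs_of_nonneg (Real.rpow_nonneg (sub_nonneg.2 (hmono ρ (hIccsub hρ) ℓ hℓ hρ.2)) _),
        abs_of_nonneg (Real.rpow_nonneg (sub_nonneg.2 (hmono σ hσ ρ (hIccsub hρ) hσρ)) _)]
    ring
  have hKbd : ∀ ρ ∈ Icc a ℓ, ∀ σ ∈ Icc a b, σ ≤ ρ →
      |K ρ σ| ≤ (C * Mz) * ((ℓ - ρ) ^ (μ - 1) * (ρ - σ) ^ (-μ)) := by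
    intro ρ hρ σ hσ hσρ
    rw [hKabs ρ hρ σ hσ hσρ]
    have h1 := hker ρ hρ σ hσ hσρ
    have h2 := hMzle σ hσ
    have h3 := hkernonneg ρ hρ σ hσ hσρ
    have h4 : 0 ≤ (ℓ - ρ) ^ (μ - 1) * (ρ - σ) ^ (-μ) :=
      mul_nonneg (Real.rpow_nonneg (by linarith [hρ.2]) _)
        (Real.rpow_nonneg (by linarith) _)
    calc Φ' ρ * ((Φ ℓ - Φ ρ) ^ (μ - 1) * (Φ ρ - Φ σ) ^ (-μ)) * |z' σ|
        ≤ (C * ((ℓ - ρ) ^ (μ - 1) * (ρ - σ) ^ (-μ))) * Mz :=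
          mul_le_mul h1 h2 (abs_nonneg _) (mul_nonneg hC0.le h4)
      _ = (C * Mz) * ((ℓ - ρ) ^ (μ - 1) * (ρ - σ) ^ (-μ)) := by ring
  -- singular integrability
  have hsing : ∀ ρ : ℝ, IntegrableOn (fun σ => (ρ - σ) ^ (-μ)) (Ioc a ρ) := by
    intro ρ
    have h := (intervalIntegrable_rpow' (a := 0) (b := ρ - a)
      (show (-1:ℝ) < -μ by linarith)).comp_sub_left ρ
    have h2 : IntervalIntegrable (fun σ => (ρ - σ) ^ (-μ)) volume a ρ := by
      simpa using h.symm
    exact h2.1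
  -- measurability of rpow
  have hrm : ∀ e : ℝ, Measurable fun t : ℝ => t ^ e := by intro e; fun_prop
  -- slice integrability (in σ)
  have hKslice : ∀ ρ ∈ S, IntegrableOn (K ρ) (Ioc a ρ) := by
    intro ρ hρ
    have hρab : ρ ∈ Icc a b := hSsub hρ
    have hρaℓ : ρ ∈ Icc a ℓ := ⟨hρ.1.le, hρ.2.le⟩
    have hsub1 : Ioc a ρ ⊆ Icc a b := fun x hx => ⟨hx.1.le, hx.2.trans hρab.2⟩
    apply Integrable.mono' (g := fun σ => ((C * Mz) * (ℓ - ρ) ^ (μ - 1)) * (ρ - σ) ^ (-μ))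
    · exact (hsing ρ).const_mul _
    · have hc1 : ContinuousOn (fun σ => Φ ρ - Φ σ) (Ioc a ρ) :=
        continuousOn_const.sub (hΦc.mono hsub1)
      have h1 : AEMeasurable (fun σ => (Φ ρ - Φ σ) ^ (-μ)) (volume.restrict (Ioc a ρ)) :=
        (hrm (-μ)).comp_aemeasurable (hc1.aemeasurable measurableSet_Ioc)
      have h2 : AEMeasurable z' (volume.restrict (Ioc a ρ)) :=
        (hz'c.mono hsub1).aemeasurable measurableSet_Ioc
      exact (aemeasurable_const.mul ((h1.mul h2))).aestronglyMeasurable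
    · filter_upwards [ae_restrict_mem measurableSet_Ioc] with σ hσ
      rw [Real.norm_eq_abs]
      calc |K ρ σ| ≤ (C * Mz) * ((ℓ - ρ) ^ (μ - 1) * (ρ - σ) ^ (-μ)) :=
            hKbd ρ hρaℓ σ (hsub1 hσ) hσ.2
        _ = ((C * Mz) * (ℓ - ρ) ^ (μ - 1)) * (ρ - σ) ^ (-μ) := by ring
  -- value of singular integral
  have hsingval : ∀ ρ, a < ρ → ∫ σ in Ioc a ρ, (ρ - σ) ^ (-μ) = (ρ - a) ^ (1 - μ) / (1 - μ) := by
    intro ρ hρ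
    rw [← intervalIntegral.integral_of_le hρ.le,
      intervalIntegral.integral_comp_sub_left (fun t => t ^ (-μ)) ρ, sub_self,
      integral_rpow (Or.inl (by linarith : (-1:ℝ) < -μ))]
    rw [Real.zero_rpow (by linarith : -μ + 1 ≠ 0)]
    have e : -μ + 1 = 1 - μ := by ring
    rw [e, sub_zero]
  -- indicator rewrites
  have hGindic : ∀ ρ : ℝ, G ρ = (Iic ρ).indicator (K ρ) := by
    intro ρ
    funext σ
    simp only [hG_def, Set.indicator_apply, mem_Iic]
  have hIicS : ∀ ρ ∈ S, Iic ρ ∩ S = Ioc a ρ := by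
    intro ρ hρ
    ext x
    simp only [mem_inter_iff, mem_Iic, hS_def, mem_Ioo, mem_Ioc]
    exact ⟨fun h => ⟨h.2.1, h.1⟩, fun h => ⟨h.2, h.1, lt_of_le_of_lt h.2 hρ.2⟩⟩
  have hGρval : ∀ ρ ∈ S, ∫ σ in S, G ρ σ = ∫ σ in Ioc a ρ, K ρ σ := by
    intro ρ hρ
    rw [hGindic ρ, setIntegral_indicator measurableSet_Iic]
    rw [Set.inter_comm, hIicS ρ hρ]
  have hGnorm_eq : ∀ ρ ∈ S, ∫ σ in S, ‖G ρ σ‖ = ∫ σ in Ioc a ρ, ‖K ρ σ‖ := by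
    intro ρ hρ
    have h1 : (fun σ => ‖G ρ σ‖) = (Iic ρ).indicator (fun σ => ‖K ρ σ‖) := by
      funext σ
      rw [hGindic ρ, norm_indicator_eq_indicator_norm]
    rw [h1, setIntegral_indicator measurableSet_Iic]
    rw [Set.inter_comm, hIicS ρ hρ]
  have hGσval : ∀ σ ∈ S, ∫ ρ in S, G ρ σ = ∫ ρ in Ioc σ ℓ, K ρ σ := by
    intro σ hσ
    have h1 : (fun ρ => G ρ σ) = (Ici σ).indicator (fun ρ => K ρ σ) := by
      funext ρ
      simp only [hG_def, Set.indicator_apply, mem_Ici]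
    rw [h1, setIntegral_indicator measurableSet_Ici]
    have h2 : S ∩ Ici σ = Ico σ ℓ := by
      ext x
      simp only [mem_inter_iff, mem_Ici, hS_def, mem_Ioo, mem_Ico]
      exact ⟨fun h => ⟨h.2, h.1.2⟩, fun h => ⟨⟨lt_of_lt_of_le hσ.1 h.1, h.2⟩, h.1⟩⟩
    rw [h2, integral_Ico_eq_integral_Ioo, ← integral_Ioc_eq_integral_Ioo]
  -- condition 2 : slices integrable
  have hGint_slice : ∀ᵐ ρ ∂(volume.restrict S), Integrable (G ρ) (volume.restrict S) := by
    filter_upwards [ae_restrict_mem hSmeas] with ρ hρ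
    rw [hGindic ρ, integrable_indicator_iff measurableSet_Iic, IntegrableOn,
      Measure.restrict_restrict measurableSet_Iic, hIicS ρ hρ]
    exact hKslice ρ hρ
  -- condition 1 : joint measurability
  have hGmeas : AEStronglyMeasurable (Function.uncurry G)
      ((volume.restrict S).prod (volume.restrict S)) := by
    rw [Measure.prod_restrict]
    have hSS : MeasurableSet (S ×ˢ S) := hSmeas.prod hSmeas
    have h1 : Function.uncurry G
        = {p : ℝ × ℝ | p.2 ≤ p.1}.indicator (fun p => K p.1 p.2) := by
      funext p
      simp only [Function.uncurry, hG_def, Set.indicator_apply, mem_setOf_eq]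
    rw [h1]
    apply AEStronglyMeasurable.indicator _ (measurableSet_le measurable_snd measurable_fst)
    have hmfst : MapsTo (Prod.fst : ℝ × ℝ → ℝ) (S ×ˢ S) (Icc a b) :=
      fun p hp => hSsub (mem_prod.1 hp).1
    have hmsnd : MapsTo (Prod.snd : ℝ × ℝ → ℝ) (S ×ˢ S) (Icc a b) :=
      fun p hp => hSsub (mem_prod.1 hp).2
    have m1 : AEMeasurable (fun p : ℝ × ℝ => Φ' p.1)
        ((volume.prod volume).restrict (S ×ˢ S)) :=
      (hΦ'c.comp continuous_fst.continuousOn hmfst).aemeasurable hSS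
    have m2 : AEMeasurable (fun p : ℝ × ℝ => (Φ ℓ - Φ p.1) ^ (μ - 1))
        ((volume.prod volume).restrict (S ×ˢ S)) :=
      (hrm (μ - 1)).comp_aemeasurable
        ((continuousOn_const.sub (hΦc.comp continuous_fst.continuousOn hmfst)).aemeasurable hSS)
    have m3 : AEMeasurable (fun p : ℝ × ℝ => (Φ p.1 - Φ p.2) ^ (-μ))
        ((volume.prod volume).restrict (S ×ˢ S)) :=
      (hrm (-μ)).comp_aemeasurable
        (((hΦc.comp continuous_fst.continuousOn hmfst).sub
          (hΦc.comp continuous_snd.continuousOn hmsnd)).aemeasurable hSS)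
    have m4 : AEMeasurable (fun p : ℝ × ℝ => z' p.2)
        ((volume.prod volume).restrict (S ×ˢ S)) :=
      (hz'c.comp continuous_snd.continuousOn hmsnd).aemeasurable hSS
    exact (((m1.mul m2).mul (m3.mul m4))).aestronglyMeasurable
  -- condition 3 : integral of norms integrable
  set D : ℝ := (C * Mz) * ((b - a) ^ (1 - μ) / (1 - μ)) with hD_def
  have hbound_int : IntegrableOn (fun ρ => D * (ℓ - ρ) ^ (μ - 1)) S := by
    have h := (intervalIntegrable_rpow' (a := 0) (b := ℓ - a)
      (show (-1:ℝ) < μ - 1 by linarith)).comp_sub_left ℓ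
    have h2 : IntervalIntegrable (fun ρ => (ℓ - ρ) ^ (μ - 1)) volume a ℓ := by
      simpa using h.symm
    exact ((h2.1).mono_set Ioo_subset_Ioc_self).const_mul _
  have hGnorm_bd : ∀ ρ ∈ S, ∫ σ in S, ‖G ρ σ‖ ≤ D * (ℓ - ρ) ^ (μ - 1) := by
    intro ρ hρ
    rw [hGnorm_eq ρ hρ]
    have hρab : ρ ∈ Icc a b := hSsub hρ
    have hρaℓ : ρ ∈ Icc a ℓ := ⟨hρ.1.le, hρ.2.le⟩
    have hsub1 : Ioc a ρ ⊆ Icc a b := fun x hx => ⟨hx.1.le, hx.2.trans hρab.2⟩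
    have hX : 0 ≤ (ℓ - ρ) ^ (μ - 1) := Real.rpow_nonneg (by linarith [hρ.2]) _
    have step1 : ∫ σ in Ioc a ρ, ‖K ρ σ‖
        ≤ ∫ σ in Ioc a ρ, ((C * Mz) * (ℓ - ρ) ^ (μ - 1)) * (ρ - σ) ^ (-μ) := by
      apply setIntegral_mono_on ((hKslice ρ hρ).norm) ((hsing ρ).const_mul _)
        measurableSet_Ioc
      intro σ hσ
      rw [Real.norm_eq_abs]
      calc |K ρ σ| ≤ (C * Mz) * ((ℓ - ρ) ^ (μ - 1) * (ρ - σ) ^ (-μ)) :=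
            hKbd ρ hρaℓ σ (hsub1 hσ) hσ.2
        _ = ((C * Mz) * (ℓ - ρ) ^ (μ - 1)) * (ρ - σ) ^ (-μ) := by ring
    have step2 : ∫ σ in Ioc a ρ, ((C * Mz) * (ℓ - ρ) ^ (μ - 1)) * (ρ - σ) ^ (-μ)
        = ((C * Mz) * (ℓ - ρ) ^ (μ - 1)) * ((ρ - a) ^ (1 - μ) / (1 - μ)) := by
      rw [MeasureTheory.integral_const_mul, hsingval ρ hρ.1]
    have step3 : ((C * Mz) * (ℓ - ρ) ^ (μ - 1)) * ((ρ - a) ^ (1 - μ) / (1 - μ))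
        ≤ D * (ℓ - ρ) ^ (μ - 1) := by
      have h1 : (ρ - a) ^ (1 - μ) ≤ (b - a) ^ (1 - μ) :=
        Real.rpow_le_rpow (by linarith [hρ.1]) (by linarith [hρab.2]) (by linarith)
      have h3 : (0:ℝ) < 1 - μ := by linarith
      have hCM : 0 ≤ (C * Mz) * (ℓ - ρ) ^ (μ - 1) := mul_nonneg (mul_nonneg hC0.le hMz0) hX
      calc ((C * Mz) * (ℓ - ρ) ^ (μ - 1)) * ((ρ - a) ^ (1 - μ) / (1 - μ))
          = ((C * Mz) * (ℓ - ρ) ^ (μ - 1) * (ρ - a) ^ (1 - μ)) / (1 - μ) := by ring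
        _ ≤ ((C * Mz) * (ℓ - ρ) ^ (μ - 1) * (b - a) ^ (1 - μ)) / (1 - μ) := by
            gcongr
        _ = D * (ℓ - ρ) ^ (μ - 1) := by rw [hD_def]; ring
    linarith
  -- Step B : inner substitution + beta
  have hstepB : ∀ σ ∈ S,
      (∫ ρ in σ..ℓ, Φ' ρ * ((Φ ℓ - Φ ρ) ^ (μ - 1) * (Φ ρ - Φ σ) ^ (-μ)))
        = Real.Gamma μ * Real.Gamma (1 - μ) := by
    intro σ hσ
    have hσab : σ ∈ Icc a b := hSsub hσ
    have hσℓ : σ < ℓ := hσ.2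
    have hIccσ : Icc σ ℓ ⊆ Icc a b := Icc_subset_Icc hσab.1 hℓb
    have hΦσℓ : Φ σ < Φ ℓ := hstrict σ hσab ℓ hℓ hσℓ
    set g : ℝ → ℝ := fun u => (Φ ℓ - u) ^ (μ - 1) * (u - Φ σ) ^ (-μ) with hg_def
    have himage1 : Φ '' Ioo σ ℓ ⊆ Ioo (Φ σ) (Φ ℓ) := by
      rintro - ⟨x, hx, rfl⟩
      exact ⟨hstrict σ hσab x (hIccσ (Ioo_subset_Icc_self hx)) hx.1,
        hstrict x (hIccσ (Ioo_subset_Icc_self hx)) ℓ hℓ hx.2⟩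
    have himage2 : Φ '' uIcc σ ℓ ⊆ Icc (Φ σ) (Φ ℓ) := by
      rw [uIcc_of_le hσℓ.le]
      rintro - ⟨x, hx, rfl⟩
      exact ⟨hmono σ hσab x (hIccσ hx) hx.1, hmono x (hIccσ hx) ℓ hℓ hx.2⟩
    have hf : ContinuousOn Φ (uIcc σ ℓ) := by
      rw [uIcc_of_le hσℓ.le]; exact hΦc.mono hIccσ
    have hff' : ∀ x ∈ Ioo (min σ ℓ) (max σ ℓ), HasDerivWithinAt Φ (Φ' x) (Ioi x) x := by
      intro x hx
      rw [min_eq_left hσℓ.le, max_eq_right hσℓ.le] at hx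
      exact (hΦd x (hIccσ (Ioo_subset_Icc_self hx))).hasDerivWithinAt
    have hgc : ContinuousOn g (Φ '' Ioo (min σ ℓ) (max σ ℓ)) := by
      rw [min_eq_left hσℓ.le, max_eq_right hσℓ.le]
      refine ContinuousOn.mono ?_ himage1
      apply ContinuousOn.mul
      · exact ContinuousOn.rpow_const (by fun_prop)
          (fun u hu => Or.inl (ne_of_gt (sub_pos.2 hu.2)))
      · exact ContinuousOn.rpow_const (by fun_prop)
          (fun u hu => Or.inl (ne_of_gt (sub_pos.2 hu.1)))
    have hg1 : IntegrableOn g (Φ '' uIcc σ ℓ) := by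
      refine IntegrableOn.mono_set ?_ himage2
      exact (integrableOn_Icc_iff_integrableOn_Ioc enorm_ne_top).2
        ((betaKer_intervalIntegrable hμ0 hμ1 (Φ σ) (Φ ℓ) hΦσℓ.le).1)
    have hg2 : IntegrableOn (fun x => Φ' x • (g ∘ Φ) x) (uIcc σ ℓ) := by
      rw [uIcc_of_le hσℓ.le]
      have hform : (fun x => Φ' x • (g ∘ Φ) x)
          = fun x => Φ' x * ((Φ ℓ - Φ x) ^ (μ - 1) * (Φ x - Φ σ) ^ (-μ)) := by
        funext x
        simp [hg_def, smul_eq_mul, Function.comp]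
      rw [hform]
      apply Integrable.mono' (g := fun ρ => C * ((ℓ - ρ) ^ (μ - 1) * (ρ - σ) ^ (-μ)))
      · exact ((integrableOn_Icc_iff_integrableOn_Ioc enorm_ne_top).2
          ((betaKer_intervalIntegrable hμ0 hμ1 σ ℓ hσℓ.le).1)).const_mul _
      · have h1 : AEMeasurable Φ' (volume.restrict (Icc σ ℓ)) :=
          (hΦ'c.mono hIccσ).aemeasurable measurableSet_Icc
        have h2 : AEMeasurable (fun x => (Φ ℓ - Φ x) ^ (μ - 1)) (volume.restrict (Icc σ ℓ)) :=
          (hrm (μ - 1)).comp_aemeasurable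
            ((continuousOn_const.sub (hΦc.mono hIccσ)).aemeasurable measurableSet_Icc)
        have h3 : AEMeasurable (fun x => (Φ x - Φ σ) ^ (-μ)) (volume.restrict (Icc σ ℓ)) :=
          (hrm (-μ)).comp_aemeasurable
            (((hΦc.mono hIccσ).sub continuousOn_const).aemeasurable measurableSet_Icc)
        exact (h1.mul (h2.mul h3)).aestronglyMeasurable
      · filter_upwards [ae_restrict_mem measurableSet_Icc] with x hx
        rw [Real.norm_eq_abs]
        have hx1 : x ∈ Icc a ℓ := ⟨hσab.1.trans hx.1, hx.2⟩
        have heq : |Φ' x * ((Φ ℓ - Φ x) ^ (μ - 1) * (Φ x - Φ σ) ^ (-μ))|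
            = Φ' x * ((Φ ℓ - Φ x) ^ (μ - 1) * (Φ x - Φ σ) ^ (-μ)) :=
          abs_of_nonneg (hkernonneg x hx1 σ hσab hx.1)
        rw [heq]
        exact hker x hx1 σ hσab hx.1
    have key := intervalIntegral.integral_comp_smul_deriv''' hf hff' hgc hg1 hg2
    have hbeta : ∫ u in Φ σ..Φ ℓ, g u = Real.Gamma μ * Real.Gamma (1 - μ) := by
      simp only [hg_def]
      exact betaKer_integral hμ0 hμ1 hΦσℓ
    rw [← hbeta, ← key]
    apply intervalIntegral.integral_congr
    intro x hx
    simp [hg_def, smul_eq_mul, Function.comp]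
  -- Fubini
  have hGint : Integrable (Function.uncurry G)
      ((volume.restrict S).prod (volume.restrict S)) := by
    refine (integrable_prod_iff hGmeas).2 ⟨?_, ?_⟩
    · exact hGint_slice
    · apply Integrable.mono' hbound_int (hGmeas.norm.integral_prod_right')
      filter_upwards [ae_restrict_mem hSmeas] with ρ hρ
      rw [Real.norm_eq_abs, abs_of_nonneg (integral_nonneg (fun σ => norm_nonneg _))]
      exact hGnorm_bd ρ hρ
  have hswap := MeasureTheory.integral_integral_swap hGint
  -- FTC for z
  have hftcz : ∫ t in a..ℓ, z' t = z ℓ - z a := by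
    have hsub : uIcc a ℓ ⊆ Icc a b := by
      rw [uIcc_of_le hal.le]; exact hIccsub
    exact intervalIntegral.integral_eq_sub_of_hasDerivAt
      (fun t ht => hzd t (hsub ht)) ((hz'c.mono hsub).intervalIntegrable)
  -- main computation
  have hJ : (∫ ρ in a..ℓ, ∫ σ in a..ρ, K ρ σ)
      = Real.Gamma μ * Real.Gamma (1 - μ) * (z ℓ - z a) := by
    have e1 : (∫ ρ in a..ℓ, ∫ σ in a..ρ, K ρ σ) = ∫ ρ in S, ∫ σ in S, G ρ σ := by
      rw [intervalIntegral.integral_of_le hal.le, integral_Ioc_eq_integral_Ioo]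
      apply setIntegral_congr_fun hSmeas
      intro ρ hρ
      show (∫ σ in a..ρ, K ρ σ) = ∫ σ in S, G ρ σ
      rw [intervalIntegral.integral_of_le hρ.1.le]
      exact (hGρval ρ hρ).symm
    have e2 : ∫ σ in S, ∫ ρ in S, G ρ σ
        = ∫ σ in S, (Real.Gamma μ * Real.Gamma (1 - μ)) * z' σ := by
      apply setIntegral_congr_fun hSmeas
      intro σ hσ
      show (∫ ρ in S, G ρ σ) = Real.Gamma μ * Real.Gamma (1 - μ) * z' σ
      rw [hGσval σ hσ, ← intervalIntegral.integral_of_le hσ.2.le]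
      have e3 : (∫ ρ in σ..ℓ, K ρ σ)
          = (∫ ρ in σ..ℓ, Φ' ρ * ((Φ ℓ - Φ ρ) ^ (μ - 1) * (Φ ρ - Φ σ) ^ (-μ))) * z' σ := by
        rw [← intervalIntegral.integral_mul_const]
        apply intervalIntegral.integral_congr
        intro x hx
        simp only [hK_def]
        ring
      rw [e3, hstepB σ hσ, mul_comm]
    rw [e1, hswap, e2, MeasureTheory.integral_const_mul]
    have e4 : ∫ σ in S, z' σ = z ℓ - z a := by
      rw [hS_def, ← integral_Ioc_eq_integral_Ioo,
        ← intervalIntegral.integral_of_le hal.le, hftcz]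
    rw [e4]
  -- final assembly
  have hinteg : ∀ ρ : ℝ, Φ' ρ * (Φ ℓ - Φ ρ) ^ (μ - 1) *
      ((1 / Real.Gamma (1 - μ)) * ∫ σ in a..ρ, (Φ ρ - Φ σ) ^ (-μ) * z' σ)
      = (1 / Real.Gamma (1 - μ)) * ∫ σ in a..ρ, K ρ σ := by
    intro ρ
    have h5 : (∫ σ in a..ρ, K ρ σ)
        = (Φ' ρ * (Φ ℓ - Φ ρ) ^ (μ - 1)) * ∫ σ in a..ρ, (Φ ρ - Φ σ) ^ (-μ) * z' σ := by
      rw [← intervalIntegral.integral_const_mul]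
    rw [h5]
    ring
  simp_rw [hinteg]
  rw [intervalIntegral.integral_const_mul, hJ]
  field_simp
end

section
/- Let p > 0, q > 0, ω ∈ ℝ and λ > 0 with |ω| < λ^p. Then ∫_a^∞ e^{−λ(Φ(ℓ)−Φ(a))} (Φ(ℓ)−Φ(a))^{q−1} E_{p,q}(ω (Φ(ℓ)−Φ(a))^p) Φ'(ℓ) dℓ = λ^{p−q}/(λ^p − ω). In particular (q = 1), ∫_a^∞ e^{−λ(Φ(ℓ)−Φ(a))} E_p(ω (Φ(ℓ)−Φ(a))^p) Φ'(ℓ) dℓ = λ^{p−1}/(λ^p − ω). -/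
open Real MeasureTheory Set Filter

/-- Two-parameter Mittag-Leffler function `E_{p,q}(x) = ∑_{k=0}^∞ x^k / Γ(pk+q)`;
the one-parameter function is `E_p = E_{p,1}`. -/
noncomputable def mittagLeffler (p q x : ℝ) : ℝ :=
  ∑' k : ℕ, x ^ k / Real.Gamma (p * k + q)

lemma ml_integrable_aux {s lam : ℝ} (hs : 0 < s) (hlam : 0 < lam) :
    IntegrableOn (fun t : ℝ => t ^ (s - 1) * Real.exp (-(lam * t))) (Ioi 0) := by
  have := integrableOn_rpow_mul_exp_neg_mul_rpow (s := s - 1) (p := 1) (b := lam)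
    (by linarith) one_pos hlam
  simpa [Real.rpow_one] using this

lemma ml_key {p q ω lam : ℝ} (hp : 0 < p) (hq : 0 < q) (hlam : 0 < lam)
    (hω : |ω| < lam ^ p) :
    ∫ t in Ioi 0, Real.exp (-lam * t) * t ^ (q - 1) *
      mittagLeffler p q (ω * t ^ p) = lam ^ (p - q) / (lam ^ p - ω) := by
  set G : ℕ → ℝ → ℝ := fun k t =>
    (ω ^ k / Real.Gamma (p * k + q)) * (t ^ (p * k + q - 1) * Real.exp (-(lam * t))) with hG
  have hskpos : ∀ k : ℕ, 0 < p * k + q := fun k => by positivity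
  have hGampos : ∀ k : ℕ, 0 < Real.Gamma (p * k + q) := fun k =>
    Real.Gamma_pos_of_pos (hskpos k)
  have hGint : ∀ k : ℕ, IntegrableOn (G k) (Ioi 0) := fun k =>
    (ml_integrable_aux (hskpos k) hlam).const_mul _
  have hGval : ∀ k : ℕ, ∫ t in Ioi 0, G k t = ω ^ k * (1 / lam) ^ (p * k + q) := by
    intro k
    rw [hG]
    rw [MeasureTheory.integral_const_mul,
      integral_rpow_mul_exp_neg_mul_Ioi (hskpos k) hlam]
    field_simp [(hGampos k).ne']
  -- rewriting (1/lam)^(p*k+q)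
  have hsplit : ∀ k : ℕ, ((1:ℝ) / lam) ^ (p * k + q) =
      ((1 / lam) ^ p) ^ k * (1 / lam) ^ q := by
    intro k
    have h1 : (0:ℝ) < 1 / lam := by positivity
    rw [Real.rpow_add h1, ← Real.rpow_natCast ((1/lam) ^ p) k, ← Real.rpow_mul h1.le]
  have hinv : ((1:ℝ)/lam) ^ p = (lam ^ p)⁻¹ := by
    rw [one_div, Real.inv_rpow hlam.le]
  have hlp : (0:ℝ) < lam ^ p := Real.rpow_pos_of_pos hlam p
  have hr : |ω * (lam ^ p)⁻¹| < 1 := by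
    rw [abs_mul, abs_inv, abs_of_pos hlp, ← div_eq_mul_inv, div_lt_one hlp]
    exact hω
  have hnorm : ∀ k : ℕ, ∫ t in Ioi 0, ‖G k t‖ =
      |ω| ^ k * (1 / lam) ^ (p * k + q) := by
    intro k
    have : ∀ t ∈ Ioi (0:ℝ), ‖G k t‖ =
        (|ω| ^ k / Real.Gamma (p * k + q)) * (t ^ (p * k + q - 1) * Real.exp (-(lam * t))) := by
      intro t ht
      have ht' : (0:ℝ) < t := ht
      rw [hG, Real.norm_eq_abs, abs_mul, abs_mul, abs_div, abs_pow, abs_of_pos (hGampos k),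
        Real.abs_rpow_of_nonneg ht'.le, abs_of_pos ht', Real.abs_exp]
    rw [setIntegral_congr_fun measurableSet_Ioi this, MeasureTheory.integral_const_mul,
      integral_rpow_mul_exp_neg_mul_Ioi (hskpos k) hlam]
    field_simp [(hGampos k).ne']
  have hsum : Summable fun k : ℕ => ∫ t in Ioi 0, ‖G k t‖ := by
    simp_rw [hnorm, hsplit, hinv]
    have : Summable fun k : ℕ => (|ω| * (lam ^ p)⁻¹) ^ k := by
      apply summable_geometric_of_lt_one (by positivity)
      calc |ω| * (lam ^ p)⁻¹ < lam ^ p * (lam ^ p)⁻¹ := by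
            exact mul_lt_mul_of_pos_right hω (by positivity)
        _ = 1 := by field_simp
    simpa [mul_pow, mul_comm, mul_assoc, mul_left_comm] using this.mul_right ((1/lam) ^ q)
  have hswap := MeasureTheory.integral_tsum_of_summable_integral_norm
      (μ := volume.restrict (Ioi 0)) hGint hsum
  have heq : ∀ t ∈ Ioi (0:ℝ),
      Real.exp (-lam * t) * t ^ (q - 1) * mittagLeffler p q (ω * t ^ p)
        = ∑' k : ℕ, G k t := by
    intro t ht
    have ht' : (0:ℝ) < t := ht
    rw [mittagLeffler, ← tsum_mul_left]
    refine tsum_congr fun k => ?_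
    simp only [hG]
    have h1 : (ω * t ^ p) ^ k = ω ^ k * t ^ (p * k) := by
      rw [mul_pow, ← Real.rpow_natCast (t ^ p) k, ← Real.rpow_mul ht'.le]
    have h2 : t ^ (p * k + q - 1) = t ^ (p * (k:ℝ)) * t ^ (q - 1) := by
      rw [← Real.rpow_add ht']; ring_nf
    rw [h1, h2]
    field_simp
  rw [setIntegral_congr_fun measurableSet_Ioi heq, ← hswap]
  simp_rw [hGval, hsplit, hinv]
  have h3 : ∀ k : ℕ, ω ^ k * (((lam ^ p)⁻¹) ^ k * (1/lam) ^ q) =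
      (1/lam) ^ q * (ω * (lam ^ p)⁻¹) ^ k := by intro k; rw [mul_pow]; ring
  simp_rw [h3]
  rw [tsum_mul_left, tsum_geometric_of_norm_lt_one (by rw [Real.norm_eq_abs]; exact hr)]
  have hq1 : ((1:ℝ)/lam) ^ q = (lam ^ q)⁻¹ := by rw [one_div, Real.inv_rpow hlam.le]
  have hpq : lam ^ (p - q) = lam ^ p / lam ^ q := Real.rpow_sub hlam p q
  have hlq : (0:ℝ) < lam ^ q := Real.rpow_pos_of_pos hlam q
  have hden : lam ^ p - ω ≠ 0 := by
    have : ω < lam ^ p := lt_of_le_of_lt (le_abs_self ω) hω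
    linarith
  rw [hq1, hpq]
  have h4 : 1 - ω * (lam ^ p)⁻¹ = (lam ^ p - ω) / lam ^ p := by field_simp
  rw [h4]
  field_simp

lemma gl_change_var (a : ℝ) (Φ Φ' : ℝ → ℝ)
    (hΦd : ∀ x ∈ Ici a, HasDerivAt Φ (Φ' x) x)
    (hΦ'pos : ∀ x ∈ Ici a, 0 < Φ' x)
    (hΦtop : Tendsto Φ atTop atTop) (g : ℝ → ℝ) :
    ∫ ℓ in Ioi a, g (Φ ℓ - Φ a) * Φ' ℓ = ∫ t in Ioi 0, g t := by
  have hcont : ContinuousOn Φ (Ici a) := fun x hx =>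
    (hΦd x hx).continuousAt.continuousWithinAt
  have hmono : StrictMonoOn Φ (Ici a) := by
    apply strictMonoOn_of_deriv_pos (convex_Ici a) hcont
    intro x hx
    rw [interior_Ici] at hx
    rw [(hΦd x (mem_Ici.2 (le_of_lt hx))).deriv]
    exact hΦ'pos x (mem_Ici.2 (le_of_lt hx))
  have himg : Φ '' Ioi a = Ioi (Φ a) := by
    apply Subset.antisymm
    · rintro _ ⟨x, hx, rfl⟩
      exact hmono (mem_Ici.2 le_rfl) (mem_Ici.2 (le_of_lt hx)) hx
    · intro y hy
      obtain ⟨b, hb1, hb2⟩ : ∃ b, a ≤ b ∧ y < Φ b := by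
        obtain ⟨b, h1, h2⟩ := ((hΦtop.eventually_gt_atTop y).and (eventually_ge_atTop a)).exists
        exact ⟨b, h2, h1⟩
      have hmem : y ∈ Ioc (Φ a) (Φ b) := ⟨hy, hb2.le⟩
      have hsub := intermediate_value_Ioc hb1 (hcont.mono (Icc_subset_Ici_self)) hmem
      exact image_mono Ioc_subset_Ioi_self hsub
  have hcv := integral_image_eq_integral_abs_deriv_smul measurableSet_Ioi
    (fun x hx => ((hΦd x (mem_Ici.2 (le_of_lt hx))).hasDerivWithinAt))
    (hmono.injOn.mono Ioi_subset_Ici_self) (fun y => g (y - Φ a))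
  rw [himg] at hcv
  have hL : ∫ y in Ioi (Φ a), g (y - Φ a) = ∫ t in Ioi 0, g t := by
    rw [← integral_indicator measurableSet_Ioi, ← integral_indicator measurableSet_Ioi]
    have hind : (Ioi (Φ a)).indicator (fun y => g (y - Φ a)) =
        fun y => (Ioi 0).indicator g (y - Φ a) := by
      funext y
      simp [Set.indicator_apply, mem_Ioi, sub_pos]
    rw [hind]
    exact MeasureTheory.integral_sub_right_eq_self ((Ioi (0:ℝ)).indicator g) (Φ a)
  rw [← hL, hcv]
  apply setIntegral_congr_fun measurableSet_Ioi
  intro x hx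
  simp only [smul_eq_mul, abs_of_pos (hΦ'pos x (mem_Ici.2 (le_of_lt hx)))]
  ring

/-- For `p, q > 0`, `ω ∈ ℝ`, `λ > 0` with `|ω| < λ^p`, the generalized
Laplace transform of `(Φ(·)−Φ(a))^{q−1} E_{p,q}(ω(Φ(·)−Φ(a))^p)` equals
`λ^{p−q}/(λ^p − ω)`; in particular (`q = 1`), the transform of
`E_p(ω(Φ(·)−Φ(a))^p)` equals `λ^{p−1}/(λ^p − ω)`. -/
theorem generalized_laplace_of_mittagLeffler
    (a : ℝ) (Φ Φ' : ℝ → ℝ)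
    (hΦd : ∀ x ∈ Ici a, HasDerivAt Φ (Φ' x) x)
    (hΦ'c : ContinuousOn Φ' (Ici a))
    (hΦ'pos : ∀ x ∈ Ici a, 0 < Φ' x)
    (hΦtop : Tendsto Φ atTop atTop)
    (p q ω lam : ℝ) (hp : 0 < p) (hq : 0 < q) (hlam : 0 < lam)
    (hω : |ω| < lam ^ p) :
    (∫ ℓ in Ioi a,
        Real.exp (-lam * (Φ ℓ - Φ a)) * (Φ ℓ - Φ a) ^ (q - 1) *
          mittagLeffler p q (ω * (Φ ℓ - Φ a) ^ p) * Φ' ℓ)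
      = lam ^ (p - q) / (lam ^ p - ω) ∧
    (∫ ℓ in Ioi a,
        Real.exp (-lam * (Φ ℓ - Φ a)) *
          mittagLeffler p 1 (ω * (Φ ℓ - Φ a) ^ p) * Φ' ℓ)
      = lam ^ (p - 1) / (lam ^ p - ω) := by
  constructor
  · have h := gl_change_var a Φ Φ' hΦd hΦ'pos hΦtop
      (fun t => Real.exp (-lam * t) * t ^ (q - 1) * mittagLeffler p q (ω * t ^ p))
    rw [h, ml_key hp hq hlam hω]
  · have h := gl_change_var a Φ Φ' hΦd hΦ'pos hΦtop
      (fun t => Real.exp (-lam * t) * mittagLeffler p 1 (ω * t ^ p))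
    rw [h]
    have h2 := ml_key hp one_pos hlam hω
    simp only [sub_self, Real.rpow_zero, mul_one] at h2
    exact h2
end

section
/- Let μ > 0 and let z : [a,∞) → ℝ be continuous and of Φ-exponential order, i.e. there exist M ≥ 0 and c ∈ ℝ with |z(ℓ)| ≤ M e^{c(Φ(ℓ)−Φ(a))} for all ℓ ≥ a. Then for every λ > max(c, 0), the generalized Laplace transform of the Φ-Riemann–Liouville fractional integral I^{μ;Φ}z satisfies L_Φ{I^{μ;Φ}z}(λ) = L_Φ{z}(λ)/λ^μ. -/
open Real MeasureTheory Set Filter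

lemma gl_aux_shift {μ lam : ℝ} (hμ : 0 < μ) (hlam : 0 < lam) (d e : ℝ) :
    IntegrableOn (fun u => Real.exp (-lam * (u - e)) * (u - d) ^ (μ - 1)) (Ioi d) ∧
      ∫ u in Ioi d, Real.exp (-lam * (u - e)) * (u - d) ^ (μ - 1)
        = Real.exp (-lam * (d - e)) * (Real.Gamma μ / lam ^ μ) := by
  set g : ℝ → ℝ := fun u => Real.exp (-lam * (u - e)) * (u - d) ^ (μ - 1) with hg
  have himg : (fun v : ℝ => v + d) '' Ioi 0 = Ioi d := by
    ext x
    simp only [mem_image, mem_Ioi]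
    constructor
    · rintro ⟨v, hv, rfl⟩; linarith
    · intro hx; exact ⟨x - d, by linarith, by ring⟩
  have hderiv : ∀ v ∈ Ioi (0:ℝ), HasDerivWithinAt (fun v : ℝ => v + d) ((fun _ : ℝ => (1:ℝ)) v) (Ioi 0) v :=
    fun v _ => ((hasDerivAt_id v).add_const d).hasDerivWithinAt
  have hinj : InjOn (fun v : ℝ => v + d) (Ioi 0) := fun x _ y _ h => by simpa using h
  have base : IntegrableOn (fun v : ℝ => v ^ (μ - 1) * Real.exp (-(lam * v))) (Ioi 0) := by
    have := integrableOn_rpow_mul_exp_neg_mul_rpow (p := 1) (s := μ - 1) (b := lam)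
      (by linarith) one_pos hlam
    simpa [Real.rpow_one] using this
  have hbase_val : ∫ v in Ioi (0:ℝ), v ^ (μ - 1) * Real.exp (-(lam * v))
      = (1 / lam) ^ μ * Real.Gamma μ := integral_rpow_mul_exp_neg_mul_Ioi hμ hlam
  have hpt : ∀ v : ℝ, |(1:ℝ)| • g (v + d)
      = Real.exp (-lam * (d - e)) * (v ^ (μ - 1) * Real.exp (-(lam * v))) := by
    intro v
    simp only [abs_one, one_smul, hg, add_sub_cancel_right]
    rw [show -lam * (v + d - e) = -lam * (d - e) + -(lam * v) by ring, Real.exp_add]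
    ring
  have hG : (1 / lam) ^ μ * Real.Gamma μ = Real.Gamma μ / lam ^ μ := by
    rw [one_div, Real.inv_rpow hlam.le, div_eq_mul_inv, mul_comm]
  constructor
  · rw [← himg, integrableOn_image_iff_integrableOn_abs_deriv_smul measurableSet_Ioi hderiv hinj g]
    exact (base.const_mul _).congr (Filter.Eventually.of_forall fun v => (hpt v).symm)
  · rw [← himg, integral_image_eq_integral_abs_deriv_smul measurableSet_Ioi hderiv hinj g]
    simp_rw [hpt]
    rw [MeasureTheory.integral_const_mul, hbase_val, hG]

section
variable (a : ℝ) (Φ Φ' : ℝ → ℝ)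

lemma gl_mono
    (hΦd : ∀ x ∈ Ici a, HasDerivAt Φ (Φ' x) x)
    (hΦ'pos : ∀ x ∈ Ici a, 0 < Φ' x) : StrictMonoOn Φ (Ici a) := by
  have hcont : ContinuousOn Φ (Ici a) := fun x hx => (hΦd x hx).continuousAt.continuousWithinAt
  refine strictMonoOn_of_hasDerivWithinAt_pos (convex_Ici a) hcont (f' := Φ') ?_ ?_
  · intro x hx
    rw [interior_Ici] at hx
    exact (hΦd x (mem_Ici.mpr hx.le)).hasDerivWithinAt
  · intro x hx
    rw [interior_Ici] at hx
    exact hΦ'pos x (mem_Ici.mpr hx.le)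

lemma gl_image
    (hΦd : ∀ x ∈ Ici a, HasDerivAt Φ (Φ' x) x)
    (hΦ'pos : ∀ x ∈ Ici a, 0 < Φ' x)
    (hΦtop : Tendsto Φ atTop atTop)
    {ρ : ℝ} (hρ : a ≤ ρ) : Φ '' Ioi ρ = Ioi (Φ ρ) := by
  have hcont : ContinuousOn Φ (Ici a) := fun x hx => (hΦd x hx).continuousAt.continuousWithinAt
  have hmono := gl_mono a Φ Φ' hΦd hΦ'pos
  apply Subset.antisymm
  · rintro _ ⟨x, hx, rfl⟩
    exact hmono hρ (le_trans hρ (le_of_lt hx)) hx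
  · intro y hy
    obtain ⟨b, hb1, hb2⟩ := ((hΦtop.eventually_ge_atTop y).and (eventually_ge_atTop (ρ + 1))).exists
    have hρb : ρ ≤ b := by linarith
    have hsub : Icc ρ b ⊆ Ici a := fun x hx => le_trans hρ hx.1
    have := intermediate_value_Ioc hρb (hcont.mono hsub)
    have hmem : y ∈ Ioc (Φ ρ) (Φ b) := ⟨hy, hb1⟩
    obtain ⟨x, hx, rfl⟩ := this hmem
    exact ⟨x, hx.1, rfl⟩

lemma gl_aux_inner
    (hΦd : ∀ x ∈ Ici a, HasDerivAt Φ (Φ' x) x)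
    (hΦ'pos : ∀ x ∈ Ici a, 0 < Φ' x)
    (hΦtop : Tendsto Φ atTop atTop)
    {μ lam : ℝ} (hμ : 0 < μ) (hlam : 0 < lam)
    {ρ : ℝ} (hρ : a ≤ ρ) :
    IntegrableOn (fun ℓ => Real.exp (-lam * (Φ ℓ - Φ a)) * (Φ ℓ - Φ ρ) ^ (μ - 1) * Φ' ℓ) (Ioi ρ) ∧
      ∫ ℓ in Ioi ρ, Real.exp (-lam * (Φ ℓ - Φ a)) * (Φ ℓ - Φ ρ) ^ (μ - 1) * Φ' ℓ
        = Real.exp (-lam * (Φ ρ - Φ a)) * (Real.Gamma μ / lam ^ μ) := by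
  set g : ℝ → ℝ := fun u => Real.exp (-lam * (u - Φ a)) * (u - Φ ρ) ^ (μ - 1) with hgdef
  have himg := gl_image a Φ Φ' hΦd hΦ'pos hΦtop hρ
  have hderiv : ∀ x ∈ Ioi ρ, HasDerivWithinAt Φ (Φ' x) (Ioi ρ) x :=
    fun x hx => (hΦd x (le_trans hρ hx.le)).hasDerivWithinAt
  have hinj : InjOn Φ (Ioi ρ) :=
    ((gl_mono a Φ Φ' hΦd hΦ'pos).injOn).mono (fun x hx => le_trans hρ hx.le)
  have hshift := gl_aux_shift hμ hlam (Φ ρ) (Φ a)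
  have hpt : ∀ ℓ ∈ Ioi ρ, |Φ' ℓ| • g (Φ ℓ)
      = Real.exp (-lam * (Φ ℓ - Φ a)) * (Φ ℓ - Φ ρ) ^ (μ - 1) * Φ' ℓ := by
    intro ℓ hℓ
    rw [smul_eq_mul, abs_of_pos (hΦ'pos ℓ (le_trans hρ hℓ.le)), hgdef]
    ring
  constructor
  · have h1 := (integrableOn_image_iff_integrableOn_abs_deriv_smul measurableSet_Ioi
      hderiv hinj g).mp (by rw [himg]; exact hshift.1)
    exact h1.congr (((ae_restrict_iff' measurableSet_Ioi).mpr (ae_of_all _ hpt)))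
  · have h2 := integral_image_eq_integral_abs_deriv_smul measurableSet_Ioi hderiv hinj g
    rw [himg] at h2
    rw [← setIntegral_congr_fun measurableSet_Ioi hpt, ← h2]
    exact hshift.2

end

lemma gl_expdecay (a : ℝ) (Φ Φ' : ℝ → ℝ)
    (hΦd : ∀ x ∈ Ici a, HasDerivAt Φ (Φ' x) x)
    (hΦ'pos : ∀ x ∈ Ici a, 0 < Φ' x)
    (hΦtop : Tendsto Φ atTop atTop)
    {lam c : ℝ} (hcl : c < lam) :
    IntegrableOn (fun ρ => Φ' ρ * Real.exp ((c - lam) * (Φ ρ - Φ a))) (Ioi a) := by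
  set g : ℝ → ℝ := fun u => Real.exp ((c - lam) * (u - Φ a)) with hgdef
  have himg := gl_image a Φ Φ' hΦd hΦ'pos hΦtop (le_refl a)
  have hderiv : ∀ x ∈ Ioi a, HasDerivWithinAt Φ (Φ' x) (Ioi a) x :=
    fun x hx => (hΦd x (mem_Ici.mpr (le_of_lt hx))).hasDerivWithinAt
  have hinj : InjOn Φ (Ioi a) :=
    ((gl_mono a Φ Φ' hΦd hΦ'pos).injOn).mono (fun x (hx : x ∈ Ioi a) => mem_Ici.mpr hx.le)
  have hbase : IntegrableOn g (Ioi (Φ a)) := by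
    have h0 : IntegrableOn (fun u : ℝ => Real.exp (-(lam - c) * u)) (Ioi (Φ a)) :=
      exp_neg_integrableOn_Ioi (Φ a) (by linarith)
    have := h0.const_mul (Real.exp ((lam - c) * Φ a))
    refine this.congr (ae_of_all _ fun u => ?_)
    simp only [hgdef, ← Real.exp_add]
    ring_nf
  have h1 := (integrableOn_image_iff_integrableOn_abs_deriv_smul measurableSet_Ioi
    hderiv hinj g).mp (by rw [himg]; exact hbase)
  refine h1.congr (((ae_restrict_iff' measurableSet_Ioi).mpr (ae_of_all _ fun x hx => ?_)))
  simp only [smul_eq_mul, abs_of_pos (hΦ'pos x (mem_Ici.mpr (le_of_lt hx))), hgdef]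

/-- For `μ > 0` and `z` continuous of Φ-exponential order, the
generalized Laplace transform of the Φ-Riemann–Liouville fractional integral
`I^{μ;Φ}z` satisfies `L_Φ{I^{μ;Φ}z}(λ) = L_Φ{z}(λ)/λ^μ` for every `λ > max(c,0)`. -/
theorem generalized_laplace_of_rl_integral
    (a : ℝ) (Φ Φ' : ℝ → ℝ)
    (hΦd : ∀ x ∈ Ici a, HasDerivAt Φ (Φ' x) x)
    (hΦ'c : ContinuousOn Φ' (Ici a))
    (hΦ'pos : ∀ x ∈ Ici a, 0 < Φ' x)
    (hΦtop : Tendsto Φ atTop atTop)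
    (μ : ℝ) (hμ : 0 < μ)
    (z : ℝ → ℝ) (hz : ContinuousOn z (Ici a))
    (M c : ℝ) (hM : 0 ≤ M)
    (hbound : ∀ ℓ ∈ Ici a, |z ℓ| ≤ M * Real.exp (c * (Φ ℓ - Φ a)))
    (lam : ℝ) (hlam : max c 0 < lam) :
    (∫ ℓ in Ioi a,
        Real.exp (-lam * (Φ ℓ - Φ a)) *
          ((1 / Real.Gamma μ) * ∫ ρ in a..ℓ, Φ' ρ * (Φ ℓ - Φ ρ) ^ (μ - 1) * z ρ) *
          Φ' ℓ)
      = (∫ ℓ in Ioi a, Real.exp (-lam * (Φ ℓ - Φ a)) * z ℓ * Φ' ℓ) / lam ^ μ := by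
  have hlam0 : 0 < lam := lt_of_le_of_lt (le_max_right c 0) hlam
  have hcl : c < lam := lt_of_le_of_lt (le_max_left c 0) hlam
  have hΓ : 0 < Real.Gamma μ := Real.Gamma_pos_of_pos hμ
  have hlmu : 0 < lam ^ μ := Real.rpow_pos_of_pos hlam0 μ
  set G : ℝ := Real.Gamma μ / lam ^ μ with hGdef
  have hGpos : 0 < G := div_pos hΓ hlmu
  have hΦcont : ContinuousOn Φ (Ici a) := fun x hx => (hΦd x hx).continuousAt.continuousWithinAt
  have hmono := gl_mono a Φ Φ' hΦd hΦ'pos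
  set H : ℝ → ℝ → ℝ := fun ℓ ρ =>
    Real.exp (-lam * (Φ ℓ - Φ a)) * (Φ' ρ * (Φ ℓ - Φ ρ) ^ (μ - 1) * z ρ) * Φ' ℓ with hHdef
  set f : ℝ → ℝ → ℝ := fun ℓ ρ => if ρ < ℓ then H ℓ ρ else 0 with hfdef
  -- section integrability in ℓ
  have hsec : ∀ ρ ∈ Ioi a, Integrable (fun ℓ => f ℓ ρ) (volume.restrict (Ioi a)) := by
    intro ρ hρ
    have hker := (gl_aux_inner a Φ Φ' hΦd hΦ'pos hΦtop hμ hlam0 hρ.le).1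
    have hH : IntegrableOn (fun ℓ => H ℓ ρ) (Ioi ρ) := by
      refine (hker.const_mul (Φ' ρ * z ρ)).congr (ae_of_all _ fun ℓ => ?_)
      simp only [hHdef]; ring
    have hind : Integrable ((Ioi ρ).indicator (fun ℓ => H ℓ ρ)) volume :=
      hH.integrable_indicator measurableSet_Ioi
    refine hind.integrableOn.congr (ae_of_all _ fun ℓ => ?_)
    by_cases h : ρ < ℓ <;> simp [hfdef, indicator, h, mem_Ioi]
  -- norm integral formula
  have hnorm_eq : ∀ ρ ∈ Ioi a,
      (∫ ℓ in Ioi a, ‖f ℓ ρ‖) = (Φ' ρ * |z ρ|) * (Real.exp (-lam * (Φ ρ - Φ a)) * G) := by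
    intro ρ hρ
    have h1 : ∀ ℓ, ‖f ℓ ρ‖ = (Ioi ρ).indicator (fun ℓ => ‖H ℓ ρ‖) ℓ := by
      intro ℓ; by_cases h : ρ < ℓ <;> simp [hfdef, indicator, h, mem_Ioi]
    simp_rw [h1]
    rw [setIntegral_indicator measurableSet_Ioi,
      show Ioi a ∩ Ioi ρ = Ioi ρ by rw [Ioi_inter_Ioi, sup_eq_right.mpr hρ.le]]
    have h2 : ∀ ℓ ∈ Ioi ρ, ‖H ℓ ρ‖
        = (Φ' ρ * |z ρ|) * (Real.exp (-lam * (Φ ℓ - Φ a)) * (Φ ℓ - Φ ρ) ^ (μ - 1) * Φ' ℓ) := by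
      intro ℓ hℓ
      have haρ : a ≤ ρ := hρ.le
      have haℓ : a ≤ ℓ := le_trans haρ hℓ.le
      have hK : 0 ≤ Real.exp (-lam * (Φ ℓ - Φ a)) * (Φ ℓ - Φ ρ) ^ (μ - 1) * Φ' ℓ := by
        refine mul_nonneg (mul_nonneg (Real.exp_nonneg _) (Real.rpow_nonneg ?_ _)) (hΦ'pos ℓ haℓ).le
        have := hmono haρ haℓ hℓ
        linarith
      rw [Real.norm_eq_abs,
        show H ℓ ρ = (Φ' ρ * z ρ) *
          (Real.exp (-lam * (Φ ℓ - Φ a)) * (Φ ℓ - Φ ρ) ^ (μ - 1) * Φ' ℓ) by simp only [hHdef]; ring,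
        abs_mul, abs_mul, abs_of_pos (hΦ'pos ρ haρ), abs_of_nonneg hK]
    rw [setIntegral_congr_fun measurableSet_Ioi h2, MeasureTheory.integral_const_mul,
      (gl_aux_inner a Φ Φ' hΦd hΦ'pos hΦtop hμ hlam0 hρ.le).2]
  -- integrability of the norm integral
  have hnormint : Integrable (fun ρ => ∫ ℓ in Ioi a, ‖f ℓ ρ‖) (volume.restrict (Ioi a)) := by
    have hIoi : Ioi a ⊆ Ici a := Ioi_subset_Ici_self
    have hg2 : IntegrableOn
        (fun ρ => (Φ' ρ * |z ρ|) * (Real.exp (-lam * (Φ ρ - Φ a)) * G)) (Ioi a) := by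
      have hdom := (gl_expdecay a Φ Φ' hΦd hΦ'pos hΦtop hcl).const_mul (M * G)
      refine hdom.mono ?_ ?_
      · refine ContinuousOn.aestronglyMeasurable ?_ measurableSet_Ioi
        refine ((hΦ'c.mono hIoi).mul (hz.mono hIoi).abs).mul (ContinuousOn.mul ?_ continuousOn_const)
        exact Real.continuous_exp.comp_continuousOn
          (((hΦcont.mono hIoi).sub continuousOn_const).const_smul (-lam))
      · rw [ae_restrict_iff' measurableSet_Ioi]
        refine ae_of_all _ fun ρ hρ => ?_
        have haρ : a ≤ ρ := hρ.le
        have hnn : 0 ≤ (Φ' ρ * |z ρ|) * (Real.exp (-lam * (Φ ρ - Φ a)) * G) :=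
          mul_nonneg (mul_nonneg (hΦ'pos ρ haρ).le (abs_nonneg _))
            (mul_nonneg (Real.exp_nonneg _) hGpos.le)
        rw [Real.norm_eq_abs, abs_of_nonneg hnn]
        refine le_trans ?_ (le_abs_self _)
        have hb := hbound ρ haρ
        calc (Φ' ρ * |z ρ|) * (Real.exp (-lam * (Φ ρ - Φ a)) * G)
            ≤ (Φ' ρ * (M * Real.exp (c * (Φ ρ - Φ a)))) * (Real.exp (-lam * (Φ ρ - Φ a)) * G) := by
              gcongr
              exact (hΦ'pos ρ haρ).le
          _ = M * G * (Φ' ρ * Real.exp ((c - lam) * (Φ ρ - Φ a))) := by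
              rw [show (c - lam) * (Φ ρ - Φ a) = c * (Φ ρ - Φ a) + -lam * (Φ ρ - Φ a) by ring,
                Real.exp_add]
              ring
    exact hg2.congr ((ae_restrict_iff' measurableSet_Ioi).mpr
      (ae_of_all _ fun ρ hρ => (hnorm_eq ρ hρ).symm))
  -- measurability of the kernel on the product
  have haesm : AEStronglyMeasurable (Function.uncurry f)
      ((volume.restrict (Ioi a)).prod (volume.restrict (Ioi a))) := by
    have hIoi : Ioi a ⊆ Ici a := Ioi_subset_Ici_self
    have hTm : MeasurableSet ((Ioi a) ×ˢ (Ioi a) : Set (ℝ × ℝ)) :=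
      measurableSet_Ioi.prod measurableSet_Ioi
    have hprodm : (volume.restrict (Ioi a)).prod (volume.restrict (Ioi a))
        = ((volume : Measure ℝ).prod volume).restrict ((Ioi a) ×ˢ (Ioi a)) :=
      Measure.prod_restrict _ _
    set m := ((volume : Measure ℝ).prod volume).restrict ((Ioi a) ×ˢ (Ioi a)) with hm
    have hc1 : ContinuousOn (fun p : ℝ × ℝ => Φ p.1) ((Ioi a) ×ˢ (Ioi a)) :=
      hΦcont.comp continuous_fst.continuousOn (fun p hp => hIoi hp.1)
    have hc2 : ContinuousOn (fun p : ℝ × ℝ => Φ p.2) ((Ioi a) ×ˢ (Ioi a)) :=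
      hΦcont.comp continuous_snd.continuousOn (fun p hp => hIoi hp.2)
    have hA : AEMeasurable (fun p : ℝ × ℝ => Φ p.1) m := hc1.aemeasurable hTm
    have hB : AEMeasurable (fun p : ℝ × ℝ => Φ p.2) m := hc2.aemeasurable hTm
    have hΦ'1 : AEMeasurable (fun p : ℝ × ℝ => Φ' p.1) m :=
      (hΦ'c.comp continuous_fst.continuousOn (fun p hp => hIoi hp.1)).aemeasurable hTm
    have hΦ'2 : AEMeasurable (fun p : ℝ × ℝ => Φ' p.2) m :=
      (hΦ'c.comp continuous_snd.continuousOn (fun p hp => hIoi hp.2)).aemeasurable hTm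
    have hz2 : AEMeasurable (fun p : ℝ × ℝ => z p.2) m :=
      (hz.comp continuous_snd.continuousOn (fun p hp => hIoi hp.2)).aemeasurable hTm
    have hpow : AEMeasurable (fun p : ℝ × ℝ => (Φ p.1 - Φ p.2) ^ (μ - 1)) m :=
      (measurable_id.pow_const (μ - 1)).comp_aemeasurable (hA.sub hB)
    have hexp : AEMeasurable (fun p : ℝ × ℝ => Real.exp (-lam * (Φ p.1 - Φ a))) m :=
      Real.measurable_exp.comp_aemeasurable ((hA.sub aemeasurable_const).const_mul (-lam))
    have hHm : AEMeasurable (fun p : ℝ × ℝ => H p.1 p.2) m :=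
      (hexp.mul ((hΦ'2.mul hpow).mul hz2)).mul hΦ'1
    have hS : MeasurableSet {p : ℝ × ℝ | p.2 < p.1} :=
      measurableSet_lt measurable_snd measurable_fst
    have huf : Function.uncurry f = ({p : ℝ × ℝ | p.2 < p.1}).indicator (fun p => H p.1 p.2) := by
      funext p
      by_cases h : p.2 < p.1 <;> simp [Function.uncurry, hfdef, indicator, h]
    rw [huf, hprodm]
    exact (hHm.aestronglyMeasurable).indicator hS
  -- integrability on the product
  have hint : Integrable (Function.uncurry f)
      ((volume.restrict (Ioi a)).prod (volume.restrict (Ioi a))) := by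
    rw [MeasureTheory.integrable_prod_iff' haesm]
    constructor
    · exact (ae_restrict_iff' measurableSet_Ioi).mpr (ae_of_all _ fun ρ hρ => hsec ρ hρ)
    · exact hnormint.congr (ae_of_all _ fun ρ => rfl)
  have hswap := MeasureTheory.integral_integral_swap hint
  -- inner integral value for fixed ρ
  have step4 : ∀ ρ ∈ Ioi a, (∫ ℓ in Ioi a, f ℓ ρ)
      = (Real.exp (-lam * (Φ ρ - Φ a)) * z ρ * Φ' ρ) * G := by
    intro ρ hρ
    have h1 : ∀ ℓ, f ℓ ρ = (Ioi ρ).indicator (fun ℓ => H ℓ ρ) ℓ := by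
      intro ℓ; by_cases h : ρ < ℓ <;> simp [hfdef, indicator, h, mem_Ioi]
    simp_rw [h1]
    rw [setIntegral_indicator measurableSet_Ioi,
      show Ioi a ∩ Ioi ρ = Ioi ρ by rw [Ioi_inter_Ioi, sup_eq_right.mpr hρ.le]]
    have h2 : ∀ ℓ ∈ Ioi ρ, H ℓ ρ
        = (Φ' ρ * z ρ) * (Real.exp (-lam * (Φ ℓ - Φ a)) * (Φ ℓ - Φ ρ) ^ (μ - 1) * Φ' ℓ) := by
      intro ℓ _; simp only [hHdef]; ring
    rw [setIntegral_congr_fun measurableSet_Ioi h2, MeasureTheory.integral_const_mul,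
      (gl_aux_inner a Φ Φ' hΦd hΦ'pos hΦtop hμ hlam0 hρ.le).2]
    ring
  -- LHS rewrite
  have step1 : ∀ ℓ ∈ Ioi a,
      Real.exp (-lam * (Φ ℓ - Φ a)) *
        ((1 / Real.Gamma μ) * ∫ ρ in a..ℓ, Φ' ρ * (Φ ℓ - Φ ρ) ^ (μ - 1) * z ρ) * Φ' ℓ
      = (1 / Real.Gamma μ) * ∫ ρ in Ioi a, f ℓ ρ := by
    intro ℓ hℓ
    have h1 : (∫ ρ in Ioi a, f ℓ ρ) = ∫ ρ in Ioo a ℓ, H ℓ ρ := by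
      have h0 : ∀ ρ, f ℓ ρ = (Iio ℓ).indicator (fun ρ => H ℓ ρ) ρ := by
        intro ρ; by_cases h : ρ < ℓ <;> simp [hfdef, indicator, h, mem_Iio]
      simp_rw [h0]
      rw [setIntegral_indicator measurableSet_Iio, Ioi_inter_Iio]
    have h2 : (∫ ρ in a..ℓ, Φ' ρ * (Φ ℓ - Φ ρ) ^ (μ - 1) * z ρ)
        = ∫ ρ in Ioo a ℓ, Φ' ρ * (Φ ℓ - Φ ρ) ^ (μ - 1) * z ρ := by
      rw [intervalIntegral.integral_of_le hℓ.le, MeasureTheory.integral_Ioc_eq_integral_Ioo]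
    have h3 : (∫ ρ in Ioo a ℓ, H ℓ ρ)
        = Real.exp (-lam * (Φ ℓ - Φ a)) *
            (∫ ρ in Ioo a ℓ, Φ' ρ * (Φ ℓ - Φ ρ) ^ (μ - 1) * z ρ) * Φ' ℓ := by
      simp only [hHdef]
      rw [MeasureTheory.integral_mul_const, MeasureTheory.integral_const_mul]
    rw [h1, h3, h2]
    ring
  calc (∫ ℓ in Ioi a,
        Real.exp (-lam * (Φ ℓ - Φ a)) *
          ((1 / Real.Gamma μ) * ∫ ρ in a..ℓ, Φ' ρ * (Φ ℓ - Φ ρ) ^ (μ - 1) * z ρ) * Φ' ℓ)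
      = ∫ ℓ in Ioi a, (1 / Real.Gamma μ) * ∫ ρ in Ioi a, f ℓ ρ :=
        setIntegral_congr_fun measurableSet_Ioi step1
    _ = (1 / Real.Gamma μ) * ∫ ℓ in Ioi a, ∫ ρ in Ioi a, f ℓ ρ :=
        MeasureTheory.integral_const_mul _ _
    _ = (1 / Real.Gamma μ) * ∫ ρ in Ioi a, ∫ ℓ in Ioi a, f ℓ ρ := by rw [hswap]
    _ = (1 / Real.Gamma μ) * ∫ ρ in Ioi a,
          (Real.exp (-lam * (Φ ρ - Φ a)) * z ρ * Φ' ρ) * G := by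
        rw [setIntegral_congr_fun measurableSet_Ioi step4]
    _ = (1 / Real.Gamma μ) * ((∫ ρ in Ioi a, Real.exp (-lam * (Φ ρ - Φ a)) * z ρ * Φ' ρ) * G) := by
        rw [MeasureTheory.integral_mul_const]
    _ = (∫ ℓ in Ioi a, Real.exp (-lam * (Φ ℓ - Φ a)) * z ℓ * Φ' ℓ) / lam ^ μ := by
        rw [hGdef]
        field_simp
end

section
/- Comparison principle: Let 0 < κ < μ < 1 and ω > 0. If γ : [a,b] → ℝ is continuously differentiable, γ(a) ≥ 0, and ᶜD^{μ;Φ}γ(ℓ) + ω ᶜD^{κ;Φ}γ(ℓ) ≥ 0 for all ℓ ∈ (a,b], then γ(ℓ) ≥ 0 for all ℓ ∈ [a,b]. -/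
open Real MeasureTheory Set Filter Topology
open scoped Interval

/-- Key lemma: at an interior global minimum point `ℓ₀` of `γ`, the Φ-fractional
integral `∫ (Φ ℓ₀ - Φ ρ)^(-ν) γ'(ρ)` is at most `-(Φ ℓ₀ - Φ a)^(-ν) (γ a - γ ℓ₀)`. -/
lemma caputo_int_at_min_le
    (a b ℓ₀ : ℝ) (ha : a < ℓ₀) (hb : ℓ₀ ≤ b)
    (Φ Φ' : ℝ → ℝ)
    (hΦd : ∀ x ∈ Icc a b, HasDerivAt Φ (Φ' x) x)
    (hΦ'c : ContinuousOn Φ' (Icc a b))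
    (hΦ'pos : ∀ x ∈ Icc a b, 0 < Φ' x)
    (ν : ℝ) (hν0 : 0 < ν) (hν1 : ν < 1)
    (γ γ' : ℝ → ℝ)
    (hγd : ∀ x ∈ Icc a b, HasDerivAt γ (γ' x) x)
    (hγ'c : ContinuousOn γ' (Icc a b))
    (hmin : ∀ x ∈ Icc a b, γ ℓ₀ ≤ γ x) :
    (∫ ρ in a..ℓ₀, (Φ ℓ₀ - Φ ρ) ^ (-ν) * γ' ρ)
      ≤ -((Φ ℓ₀ - Φ a) ^ (-ν) * (γ a - γ ℓ₀)) := by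
  have hab : a ≤ b := ha.le.trans hb
  have hℓ₀m : ℓ₀ ∈ Icc a b := ⟨ha.le, hb⟩
  have hsub : Icc a ℓ₀ ⊆ Icc a b := Icc_subset_Icc le_rfl hb
  have hsub' : Ioo a ℓ₀ ⊆ Icc a b := fun x hx => hsub ⟨hx.1.le, hx.2.le⟩
  have hΦc : ContinuousOn Φ (Icc a b) := fun x hx =>
    (hΦd x hx).continuousAt.continuousWithinAt
  have hγc : ContinuousOn γ (Icc a b) := fun x hx =>
    (hγd x hx).continuousAt.continuousWithinAt
  -- lower bound c for Φ'
  obtain ⟨x₀, hx₀, hx₀m⟩ := isCompact_Icc.exists_isMinOn (nonempty_Icc.2 hab) hΦ'c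
  set c : ℝ := Φ' x₀ with hc_def
  have hc : 0 < c := hΦ'pos x₀ hx₀
  have hcle : ∀ x ∈ Icc a b, c ≤ Φ' x := fun x hx => hx₀m hx
  -- upper bound M for |γ'|
  obtain ⟨M, hM⟩ := isCompact_Icc.exists_bound_of_continuousOn hγ'c
  have hM0 : 0 ≤ M := le_trans (norm_nonneg _) (hM a (left_mem_Icc.2 hab))
  -- MVT-type bound : c * (ℓ₀ - ρ) ≤ Φ ℓ₀ - Φ ρ
  have hψmono : MonotoneOn (fun ρ => Φ ρ - c * ρ) (Icc a b) := by
    have hψd : ∀ x ∈ Icc a b, HasDerivAt (fun ρ => Φ ρ - c * ρ) (Φ' x - c) x := by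
      intro x hx
      exact ((hΦd x hx).sub ((hasDerivAt_id x).const_mul c)).congr_deriv (by simp)
    refine monotoneOn_of_deriv_nonneg (convex_Icc a b)
      (hΦc.sub ((continuous_const.mul continuous_id).continuousOn)) ?_ ?_
    · intro x hx
      rw [interior_Icc] at hx
      exact (hψd x (Ioo_subset_Icc_self hx)).differentiableAt.differentiableWithinAt
    · intro x hx
      rw [interior_Icc] at hx
      rw [(hψd x (Ioo_subset_Icc_self hx)).deriv]
      linarith [hcle x (Ioo_subset_Icc_self hx)]
  have hΦlb : ∀ ρ ∈ Icc a ℓ₀, c * (ℓ₀ - ρ) ≤ Φ ℓ₀ - Φ ρ := by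
    intro ρ hρ
    have := hψmono (hsub hρ) hℓ₀m hρ.2
    simp only at this
    linarith
  have hpos : ∀ ρ ∈ Ico a ℓ₀, 0 < Φ ℓ₀ - Φ ρ := by
    intro ρ hρ
    have h1 : 0 < c * (ℓ₀ - ρ) := mul_pos hc (by linarith [hρ.2])
    linarith [hΦlb ρ ⟨hρ.1, hρ.2.le⟩]
  -- Lipschitz-type bound : γ t - γ ℓ₀ ≤ M * (ℓ₀ - t)
  have hχmono : MonotoneOn (fun ρ => γ ρ + M * ρ) (Icc a b) := by
    have hχd : ∀ x ∈ Icc a b, HasDerivAt (fun ρ => γ ρ + M * ρ) (γ' x + M) x := by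
      intro x hx
      exact ((hγd x hx).add ((hasDerivAt_id x).const_mul M)).congr_deriv (by simp)
    refine monotoneOn_of_deriv_nonneg (convex_Icc a b)
      (hγc.add ((continuous_const.mul continuous_id).continuousOn)) ?_ ?_
    · intro x hx
      rw [interior_Icc] at hx
      exact (hχd x (Ioo_subset_Icc_self hx)).differentiableAt.differentiableWithinAt
    · intro x hx
      rw [interior_Icc] at hx
      rw [(hχd x (Ioo_subset_Icc_self hx)).deriv]
      have := hM x (Ioo_subset_Icc_self hx)
      rw [Real.norm_eq_abs, abs_le] at this
      linarith [this.1]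
  have hγub : ∀ t ∈ Icc a ℓ₀, γ t - γ ℓ₀ ≤ M * (ℓ₀ - t) := by
    intro t ht
    have := hχmono (hsub ht) hℓ₀m ht.2
    simp only at this
    linarith
  set w : ℝ → ℝ := fun ρ => (Φ ℓ₀ - Φ ρ) ^ (-ν) with hw_def
  set G : ℝ → ℝ := fun ρ => γ ρ - γ ℓ₀ with hG_def
  have hGnn : ∀ x ∈ Icc a b, 0 ≤ G x := fun x hx => sub_nonneg.2 (hmin x hx)
  -- bound on w
  have hwle : ∀ ρ ∈ Ico a ℓ₀, w ρ ≤ c ^ (-ν) * (ℓ₀ - ρ) ^ (-ν) := by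
    intro ρ hρ
    have h1 : 0 < c * (ℓ₀ - ρ) := mul_pos hc (by linarith [hρ.2])
    have h2 : (Φ ℓ₀ - Φ ρ) ^ (-ν) ≤ (c * (ℓ₀ - ρ)) ^ (-ν) :=
      Real.rpow_le_rpow_of_nonpos h1 (hΦlb ρ ⟨hρ.1, hρ.2.le⟩) (by linarith)
    calc w ρ ≤ (c * (ℓ₀ - ρ)) ^ (-ν) := h2
      _ = c ^ (-ν) * (ℓ₀ - ρ) ^ (-ν) := Real.mul_rpow hc.le (by linarith [hρ.2])
  have hwnn : ∀ ρ ∈ Ico a ℓ₀, 0 ≤ w ρ := fun ρ hρ =>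
    (Real.rpow_pos_of_pos (hpos ρ hρ) _).le
  -- integrability of w * γ' on a..ℓ₀
  have hgint : IntervalIntegrable (fun ρ => M * c ^ (-ν) * (ℓ₀ - ρ) ^ (-ν))
      volume a ℓ₀ := by
    have h1 : IntervalIntegrable (fun x : ℝ => x ^ (-ν)) volume 0 (ℓ₀ - a) :=
      intervalIntegral.intervalIntegrable_rpow' (by linarith)
    have h2 := (h1.comp_sub_left ℓ₀)
    have : IntervalIntegrable (fun x : ℝ => (ℓ₀ - x) ^ (-ν)) volume a ℓ₀ := by
      simpa using h2.symm
    exact this.const_mul _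
  have hwγ'cont : ContinuousOn (fun ρ => w ρ * γ' ρ) (Ioo a ℓ₀) := by
    refine ContinuousOn.mul ?_ (hγ'c.mono hsub')
    exact (continuousOn_const.sub (hΦc.mono hsub')).rpow_const
      (fun x hx => Or.inl (ne_of_gt (hpos x (Ioo_subset_Ico_self hx))))
  have hfm : AEStronglyMeasurable (fun ρ => w ρ * γ' ρ)
      (volume.restrict (Ι a ℓ₀)) := by
    rw [uIoc_of_le ha.le, ← Measure.restrict_congr_set Ioo_ae_eq_Ioc]
    exact hwγ'cont.aestronglyMeasurable measurableSet_Ioo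
  have hbound : (fun x => ‖w x * γ' x‖)
      ≤ᵐ[volume.restrict (Ι a ℓ₀)] fun ρ => M * c ^ (-ν) * (ℓ₀ - ρ) ^ (-ν) := by
    rw [uIoc_of_le ha.le]
    refine (ae_restrict_mem measurableSet_Ioc).mono (fun ρ hρ => ?_)
    show ‖w ρ * γ' ρ‖ ≤ M * c ^ (-ν) * (ℓ₀ - ρ) ^ (-ν)
    rcases eq_or_lt_of_le hρ.2 with h | h
    · have : w ρ = 0 := by
        simp only [hw_def, h, sub_self, Real.zero_rpow (by linarith : -ν ≠ 0)]
      rw [this]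
      have : (ℓ₀ - ρ) ^ (-ν) = 0 := by
        rw [h, sub_self, Real.zero_rpow (by linarith : -ν ≠ 0)]
      rw [this]
      simp
    · have hρ' : ρ ∈ Ico a ℓ₀ := ⟨hρ.1.le, h⟩
      have h1 := hwle ρ hρ'
      have h2 := hM ρ (hsub ⟨hρ.1.le, h.le⟩)
      have h3 := hwnn ρ hρ'
      have h5 : (0:ℝ) ≤ c ^ (-ν) * (ℓ₀ - ρ) ^ (-ν) :=
        mul_nonneg (Real.rpow_nonneg hc.le _) (Real.rpow_nonneg (by linarith) _)
      rw [norm_mul, Real.norm_eq_abs (w ρ), abs_of_nonneg h3]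
      calc w ρ * ‖γ' ρ‖ ≤ (c ^ (-ν) * (ℓ₀ - ρ) ^ (-ν)) * M :=
            mul_le_mul h1 h2 (norm_nonneg _) h5
        _ = M * c ^ (-ν) * (ℓ₀ - ρ) ^ (-ν) := by ring
  have hfint : IntervalIntegrable (fun ρ => w ρ * γ' ρ) volume a ℓ₀ :=
    hgint.mono_fun' hfm hbound
  -- continuity of the primitive at ℓ₀
  set F : ℝ → ℝ := fun t => ∫ ρ in a..t, w ρ * γ' ρ with hF_def
  have hFc : ContinuousWithinAt F (Icc a ℓ₀) ℓ₀ := by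
    refine intervalIntegral.continuousWithinAt_primitive (measure_singleton _) ?_
    rw [min_self, max_eq_right ha.le]
    exact hfint
  have hne : (𝓝[Ico a ℓ₀] ℓ₀).NeBot := by
    rw [← mem_closure_iff_nhdsWithin_neBot, closure_Ico ha.ne]
    exact right_mem_Icc.2 ha.le
  have hFt : Tendsto F (𝓝[Ico a ℓ₀] ℓ₀) (𝓝 (F ℓ₀)) :=
    (hFc.mono Ico_subset_Icc_self).tendsto
  -- the IBP inequality for t < ℓ₀
  have hIBP : ∀ t ∈ Ico a ℓ₀, F t ≤ w t * G t - w a * G a := by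
    intro t ht
    have hat : a ≤ t := ht.1
    have hsubt : Icc a t ⊆ Ico a ℓ₀ := fun x hx => ⟨hx.1, lt_of_le_of_lt hx.2 ht.2⟩
    have hsubt' : Icc a t ⊆ Icc a b := fun x hx => hsub ⟨hx.1, (hsubt hx).2.le⟩
    set w' : ℝ → ℝ := fun x => -Φ' x * -ν * (Φ ℓ₀ - Φ x) ^ (-ν - 1) with hw'_def
    have hu : ∀ x ∈ [[a, t]], HasDerivAt w (w' x) x := by
      intro x hx
      rw [uIcc_of_le hat] at hx
      have h1 : HasDerivAt (fun ρ => Φ ℓ₀ - Φ ρ) (-Φ' x) x :=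
        (hΦd x (hsubt' hx)).const_sub (Φ ℓ₀)
      exact h1.rpow_const (Or.inl (ne_of_gt (hpos x (hsubt hx))))
    have hv : ∀ x ∈ [[a, t]], HasDerivAt G (γ' x) x := by
      intro x hx
      rw [uIcc_of_le hat] at hx
      exact (hγd x (hsubt' hx)).sub_const _
    have hu' : IntervalIntegrable w' volume a t := by
      apply ContinuousOn.intervalIntegrable
      rw [uIcc_of_le hat]
      refine ContinuousOn.mul ?_ ?_
      · exact ((hΦ'c.mono hsubt').neg).mul continuousOn_const
      · exact (continuousOn_const.sub (hΦc.mono hsubt')).rpow_const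
          (fun x hx => Or.inl (ne_of_gt (hpos x (hsubt hx))))
    have hv' : IntervalIntegrable γ' volume a t := by
      apply ContinuousOn.intervalIntegrable
      rw [uIcc_of_le hat]
      exact hγ'c.mono hsubt'
    have heq := intervalIntegral.integral_mul_deriv_eq_deriv_mul hu hv hu' hv'
    have hnn : 0 ≤ ∫ ρ in a..t, w' ρ * G ρ := by
      apply intervalIntegral.integral_nonneg hat
      intro u hu
      have h1 : 0 < (Φ ℓ₀ - Φ u) ^ (-ν - 1) :=
        Real.rpow_pos_of_pos (hpos u (hsubt hu)) _
      have h2 : 0 < Φ' u := hΦ'pos u (hsubt' hu)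
      have h3 : 0 ≤ G u := hGnn u (hsubt' hu)
      have h4 : 0 ≤ w' u := by
        rw [hw'_def]
        have : -Φ' u * -ν = ν * Φ' u := by ring
        simp only [this]
        positivity
      exact mul_nonneg h4 h3
    rw [hF_def]
    simp only
    rw [heq]
    linarith
  -- limit of the right-hand side
  have hwG0 : Tendsto (fun t => w t * G t) (𝓝[Ico a ℓ₀] ℓ₀) (𝓝 0) := by
    apply squeeze_zero' (g := fun t => M * c ^ (-ν) * (ℓ₀ - t) ^ (1 - ν))
    · filter_upwards [self_mem_nhdsWithin] with t ht
      exact mul_nonneg (hwnn t ht) (hGnn t (hsub ⟨ht.1, ht.2.le⟩))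
    · filter_upwards [self_mem_nhdsWithin] with t ht
      have h1 := hwle t ht
      have h2 := hγub t ⟨ht.1, ht.2.le⟩
      have h3 := hwnn t ht
      have h4 := hGnn t (hsub ⟨ht.1, ht.2.le⟩)
      have h5 : (0:ℝ) ≤ c ^ (-ν) * (ℓ₀ - t) ^ (-ν) :=
        mul_nonneg (Real.rpow_nonneg hc.le _) (Real.rpow_nonneg (by linarith [ht.2]) _)
      have h6 : (ℓ₀ - t) ^ (1 - ν) = (ℓ₀ - t) ^ (-ν) * (ℓ₀ - t) := by
        rw [show (1:ℝ) - ν = -ν + 1 by ring]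
        exact Real.rpow_add_one (by linarith [ht.2] : ℓ₀ - t ≠ 0) _
      calc w t * G t ≤ (c ^ (-ν) * (ℓ₀ - t) ^ (-ν)) * (M * (ℓ₀ - t)) :=
            mul_le_mul h1 (by simpa [hG_def] using h2) h4 h5
        _ = M * c ^ (-ν) * ((ℓ₀ - t) ^ (-ν) * (ℓ₀ - t)) := by ring
        _ = M * c ^ (-ν) * (ℓ₀ - t) ^ (1 - ν) := by rw [h6]
    · have h1 : Tendsto (fun t : ℝ => ℓ₀ - t) (𝓝[Ico a ℓ₀] ℓ₀) (𝓝 0) := by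
        have hcont : Continuous (fun t : ℝ => ℓ₀ - t) := continuous_const.sub continuous_id
        have h := hcont.tendsto ℓ₀
        simp only [sub_self] at h
        exact h.mono_left nhdsWithin_le_nhds
      have h2 : Tendsto (fun x : ℝ => x ^ (1 - ν)) (𝓝 0) (𝓝 0) := by
        have := (Real.continuousAt_rpow_const 0 (1 - ν) (Or.inr (by linarith))).tendsto
        rwa [Real.zero_rpow (by linarith : (1:ℝ) - ν ≠ 0)] at this
      have h3 := (h2.comp h1).const_mul (M * c ^ (-ν))
      simpa using h3
  have hRHS : Tendsto (fun t => w t * G t - w a * G a) (𝓝[Ico a ℓ₀] ℓ₀)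
      (𝓝 (0 - w a * G a)) := hwG0.sub tendsto_const_nhds
  have hfinal : F ℓ₀ ≤ 0 - w a * G a := by
    refine le_of_tendsto_of_tendsto hFt hRHS ?_
    filter_upwards [self_mem_nhdsWithin] with t ht
    exact hIBP t ht
  have : F ℓ₀ = ∫ ρ in a..ℓ₀, (Φ ℓ₀ - Φ ρ) ^ (-ν) * γ' ρ := rfl
  rw [← this]
  simp only [hw_def, hG_def] at hfinal
  linarith

/-- Comparison principle: For `0 < κ < μ < 1`, `ω > 0`, if `γ` is
continuously differentiable on `[a,b]` with `γ(a) ≥ 0` and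
`ᶜD^{μ;Φ}γ(ℓ) + ω ᶜD^{κ;Φ}γ(ℓ) ≥ 0` for all `ℓ ∈ (a,b]`,
then `γ(ℓ) ≥ 0` on `[a,b]`. -/
theorem comparison_principle
    (a b : ℝ) (hab : a < b)
    (Φ Φ' : ℝ → ℝ)
    (hΦd : ∀ x ∈ Icc a b, HasDerivAt Φ (Φ' x) x)
    (hΦ'c : ContinuousOn Φ' (Icc a b))
    (hΦ'pos : ∀ x ∈ Icc a b, 0 < Φ' x)
    (μ κ ω : ℝ) (hκ0 : 0 < κ) (hκμ : κ < μ) (hμ1 : μ < 1) (hω : 0 < ω)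
    (γ γ' : ℝ → ℝ)
    (hγd : ∀ x ∈ Icc a b, HasDerivAt γ (γ' x) x)
    (hγ'c : ContinuousOn γ' (Icc a b))
    (hγa : 0 ≤ γ a)
    (hineq : ∀ ℓ ∈ Ioc a b,
      0 ≤ (1 / Real.Gamma (1 - μ)) * (∫ ρ in a..ℓ, (Φ ℓ - Φ ρ) ^ (-μ) * γ' ρ)
        + ω * ((1 / Real.Gamma (1 - κ)) * ∫ ρ in a..ℓ, (Φ ℓ - Φ ρ) ^ (-κ) * γ' ρ)) :
    ∀ ℓ ∈ Icc a b, 0 ≤ γ ℓ := by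
  by_contra hcon
  push_neg at hcon
  obtain ⟨ℓ₁, hℓ₁, hneg⟩ := hcon
  have hγc : ContinuousOn γ (Icc a b) := fun x hx =>
    (hγd x hx).continuousAt.continuousWithinAt
  obtain ⟨ℓ₀, hℓ₀, hminOn⟩ := isCompact_Icc.exists_isMinOn (nonempty_Icc.2 hab.le) hγc
  have hmin : ∀ x ∈ Icc a b, γ ℓ₀ ≤ γ x := fun x hx => hminOn hx
  have hm : γ ℓ₀ < 0 := lt_of_le_of_lt (hmin ℓ₁ hℓ₁) hneg
  have ha0 : a < ℓ₀ := by
    rcases lt_or_eq_of_le hℓ₀.1 with h | h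
    · exact h
    · exfalso; rw [← h] at hm; linarith
  have hIμ := caputo_int_at_min_le a b ℓ₀ ha0 hℓ₀.2 Φ Φ' hΦd hΦ'c hΦ'pos μ
    (lt_trans hκ0 hκμ) hμ1 γ γ' hγd hγ'c hmin
  have hIκ := caputo_int_at_min_le a b ℓ₀ ha0 hℓ₀.2 Φ Φ' hΦd hΦ'c hΦ'pos κ
    hκ0 (lt_trans hκμ hμ1) γ γ' hγd hγ'c hmin
  -- Φ is strictly increasing
  have hΦc : ContinuousOn Φ (Icc a b) := fun x hx =>
    (hΦd x hx).continuousAt.continuousWithinAt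
  have hΦmono : StrictMonoOn Φ (Icc a b) := by
    refine strictMonoOn_of_deriv_pos (convex_Icc a b) hΦc ?_
    intro x hx
    rw [interior_Icc] at hx
    rw [(hΦd x (Ioo_subset_Icc_self hx)).deriv]
    exact hΦ'pos x (Ioo_subset_Icc_self hx)
  have hA : 0 < Φ ℓ₀ - Φ a :=
    sub_pos.2 (hΦmono (left_mem_Icc.2 hab.le) hℓ₀ ha0)
  have hGa : 0 < γ a - γ ℓ₀ := by linarith
  have hcμ : 0 < 1 / Real.Gamma (1 - μ) := by
    have := Real.Gamma_pos_of_pos (by linarith : 0 < 1 - μ)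
    positivity
  have hcκ : 0 < 1 / Real.Gamma (1 - κ) := by
    have := Real.Gamma_pos_of_pos (by linarith : (0:ℝ) < 1 - κ)
    positivity
  have hPμ : 0 < (Φ ℓ₀ - Φ a) ^ (-μ) := Real.rpow_pos_of_pos hA _
  have hPκ : 0 < (Φ ℓ₀ - Φ a) ^ (-κ) := Real.rpow_pos_of_pos hA _
  have h0 := hineq ℓ₀ ⟨ha0, hℓ₀.2⟩
  nlinarith [mul_le_mul_of_nonneg_left hIμ hcμ.le,
    mul_le_mul_of_nonneg_left hIκ (mul_pos hω hcκ).le,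
    mul_pos hcμ (mul_pos hPμ hGa),
    mul_pos (mul_pos hω hcκ) (mul_pos hPκ hGa)]
end

section
/- Uniqueness: Let 0 < κ < μ < 1, ω > 0, z_a ∈ ℝ, and let F : [a,b] × ℝ → ℝ be continuous with |F(ℓ,y) − F(ℓ,x)| ≤ L|y − x| for all ℓ ∈ [a,b] and x, y ∈ ℝ, for some L > 0. If z, z̄ : [a,b] → ℝ are both continuous solutions of the integral equation z(ℓ) = z_a + ∫_a^ℓ Φ'(ρ)(Φ(ℓ)−Φ(ρ))^{μ−1} E_{μ−κ,μ}(−ω(Φ(ℓ)−Φ(ρ))^{μ−κ}) F(ρ, z(ρ)) dρ on [a,b] with the same initial value z_a, then z(ℓ) = z̄(ℓ) for all ℓ ∈ [a,b]. -/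
open Real MeasureTheory Set

/-- Log-convexity consequence: `Γ(x) * (x-1)^p ≤ Γ(x+p)` for `x ≥ 2`, `p > 0`. -/
lemma Gamma_ratio_lb {x p : ℝ} (hx : 2 ≤ x) (hp : 0 < p) :
    Real.Gamma x * (x - 1) ^ p ≤ Real.Gamma (x + p) := by
  have hx1 : (1:ℝ) < x := by linarith
  have hx0 : (0:ℝ) < x - 1 := by linarith
  have hΓx : 0 < Real.Gamma x := Real.Gamma_pos_of_pos (by linarith)
  have hΓx1 : 0 < Real.Gamma (x - 1) := Real.Gamma_pos_of_pos hx0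
  have hΓxp : 0 < Real.Gamma (x + p) := Real.Gamma_pos_of_pos (by linarith)
  have hslope := Real.convexOn_log_Gamma.slope_mono_adjacent
    (show x - 1 ∈ Ioi (0:ℝ) from hx0) (show x + p ∈ Ioi (0:ℝ) by simp; linarith)
    (show x - 1 < x by linarith) (show x < x + p by linarith)
  have hfe : Real.Gamma x = (x - 1) * Real.Gamma (x - 1) := by
    have := Real.Gamma_add_one (s := x - 1) (by positivity)
    simpa using this
  have hlog : (Real.log ∘ Real.Gamma) x - (Real.log ∘ Real.Gamma) (x - 1) = Real.log (x - 1) := by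
    simp only [Function.comp_apply, hfe]
    rw [Real.log_mul (by positivity) (by positivity)]
    ring
  rw [show x - (x - 1) = 1 by ring, show x + p - x = p by ring, div_one, hlog] at hslope
  have h2 : Real.log (Real.Gamma x * (x - 1) ^ p) ≤ Real.log (Real.Gamma (x + p)) := by
    rw [Real.log_mul (by positivity) (by positivity), Real.log_rpow hx0]
    have : p * Real.log (x - 1) ≤ (Real.log ∘ Real.Gamma) (x + p) - Real.log (Real.Gamma x) := by
      have := (le_div_iff₀ hp).mp hslope
      simpa [Function.comp_apply, mul_comm] using this
    simp only [Function.comp_apply] at this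
    linarith
  have := Real.exp_le_exp.mpr h2
  rwa [Real.exp_log (by positivity), Real.exp_log hΓxp] at this

/-- Summability of the Mittag-Leffler coefficient series. -/
lemma summable_ML {p q R : ℝ} (hp : 0 < p) (hq : 0 < q) (hR : 0 ≤ R) :
    Summable (fun k : ℕ => R ^ k / Real.Gamma (p * k + q)) := by
  apply summable_of_ratio_norm_eventually_le (r := 1/2) (by norm_num)
  have h0 : Filter.Tendsto (fun k : ℕ => p * (k:ℝ)) Filter.atTop Filter.atTop :=
    Filter.Tendsto.const_mul_atTop hp tendsto_natCast_atTop_atTop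
  have h1 : Filter.Tendsto (fun k : ℕ => p * k + q - 1) Filter.atTop Filter.atTop :=
    (Filter.tendsto_atTop_add_const_right _ (q-1) h0).congr (fun k => by ring)
  filter_upwards [h1.eventually_ge_atTop ((2*R+1) ^ p⁻¹), h1.eventually_ge_atTop 1] with k hk hk2
  have hx2 : 2 ≤ p * k + q := by linarith
  have hΓ : 0 < Real.Gamma (p * k + q) := Real.Gamma_pos_of_pos (by linarith)
  have hΓ' : 0 < Real.Gamma (p * k + q + p) := Real.Gamma_pos_of_pos (by linarith)
  have hpow : (2*R+1) ≤ (p * k + q - 1) ^ p := by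
    calc (2*R+1) = ((2*R+1) ^ p⁻¹) ^ p := (Real.rpow_inv_rpow (by linarith) hp.ne').symm
    _ ≤ (p * k + q - 1) ^ p :=
      Real.rpow_le_rpow (Real.rpow_nonneg (by linarith) _) hk hp.le
  have hkey : (2*R+1) * Real.Gamma (p * k + q) ≤ Real.Gamma (p * k + q + p) := by
    calc (2*R+1) * Real.Gamma (p * k + q) ≤ Real.Gamma (p * k + q) * (p * k + q - 1) ^ p := by
          rw [mul_comm]; exact mul_le_mul_of_nonneg_left hpow hΓ.le
    _ ≤ Real.Gamma (p * k + q + p) := Gamma_ratio_lb hx2 hp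
  have harg : p * (k+1 : ℕ) + q = p * k + q + p := by push_cast; ring
  rw [harg]
  rw [Real.norm_eq_abs, Real.norm_eq_abs, abs_div, abs_div, abs_of_pos hΓ, abs_of_pos hΓ',
    abs_pow, abs_pow, abs_of_nonneg hR]
  rw [div_le_iff₀ hΓ', mul_div_assoc', div_mul_eq_mul_div, le_div_iff₀ hΓ, pow_succ]
  nlinarith [mul_le_mul_of_nonneg_left hkey (pow_nonneg hR k), mul_nonneg (pow_nonneg hR k) hΓ.le]

lemma ML_bound {p q R x : ℝ} (hp : 0 < p) (hq : 0 < q) (hx : |x| ≤ R) :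
    |mittagLeffler p q x| ≤ ∑' k : ℕ, R ^ k / Real.Gamma (p * k + q) := by
  have hR : 0 ≤ R := (abs_nonneg x).trans hx
  have hsum := summable_ML hp hq hR (R := R)
  have hbd : ∀ k : ℕ, ‖x ^ k / Real.Gamma (p * k + q)‖ ≤ R ^ k / Real.Gamma (p * k + q) := by
    intro k
    have hΓ : 0 < Real.Gamma (p * k + q) := Real.Gamma_pos_of_pos (by positivity)
    rw [Real.norm_eq_abs, abs_div, abs_of_pos hΓ, abs_pow]
    gcongr
  have hsn : Summable (fun k : ℕ => ‖x ^ k / Real.Gamma (p * k + q)‖) :=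
    Summable.of_nonneg_of_le (fun k => norm_nonneg _) hbd hsum
  calc |mittagLeffler p q x| ≤ ∑' k : ℕ, ‖x ^ k / Real.Gamma (p * k + q)‖ := by
        rw [← Real.norm_eq_abs]; exact norm_tsum_le_tsum_norm hsn
  _ ≤ ∑' k : ℕ, R ^ k / Real.Gamma (p * k + q) := Summable.tsum_le_tsum hbd hsn hsum

lemma ML_continuousOn {p q R : ℝ} (hp : 0 < p) (hq : 0 < q) (hR : 0 ≤ R) :
    ContinuousOn (mittagLeffler p q) (Icc (-R) R) := by
  apply continuousOn_tsum (u := fun k : ℕ => R ^ k / Real.Gamma (p * k + q))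
    (fun k => (continuous_pow k).continuousOn.div_const _) (summable_ML hp hq hR)
  intro k x hx
  have hΓ : 0 < Real.Gamma (p * k + q) := Real.Gamma_pos_of_pos (by positivity)
  rw [Real.norm_eq_abs, abs_div, abs_of_pos hΓ, abs_pow]
  gcongr
  exact abs_le.mpr ⟨hx.1, hx.2⟩
set_option maxHeartbeats 2000000 in
/-- Uniqueness: two continuous solutions of the integral equation with
the same initial value `z_a` coincide on `[a,b]`. -/
theorem uniqueness_of_solutions
    (a b : ℝ) (hab : a < b)
    (Φ Φ' : ℝ → ℝ)
    (hΦd : ∀ x ∈ Icc a b, HasDerivAt Φ (Φ' x) x)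
    (hΦ'c : ContinuousOn Φ' (Icc a b))
    (hΦ'pos : ∀ x ∈ Icc a b, 0 < Φ' x)
    (μ κ ω za : ℝ) (hκ0 : 0 < κ) (hκμ : κ < μ) (hμ1 : μ < 1) (hω : 0 < ω)
    (F : ℝ → ℝ → ℝ)
    (hFc : ContinuousOn (fun p : ℝ × ℝ => F p.1 p.2) (Icc a b ×ˢ (univ : Set ℝ)))
    (L : ℝ) (hL : 0 < L)
    (hlip : ∀ ℓ ∈ Icc a b, ∀ x y : ℝ, |F ℓ y - F ℓ x| ≤ L * |y - x|)
    (z zb : ℝ → ℝ) (hzc : ContinuousOn z (Icc a b)) (hzbc : ContinuousOn zb (Icc a b))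
    (hz : ∀ ℓ ∈ Icc a b,
      z ℓ = za + ∫ ρ in a..ℓ,
        Φ' ρ * (Φ ℓ - Φ ρ) ^ (μ - 1) *
          mittagLeffler (μ - κ) μ (-ω * (Φ ℓ - Φ ρ) ^ (μ - κ)) * F ρ (z ρ))
    (hzb : ∀ ℓ ∈ Icc a b,
      zb ℓ = za + ∫ ρ in a..ℓ,
        Φ' ρ * (Φ ℓ - Φ ρ) ^ (μ - 1) *
          mittagLeffler (μ - κ) μ (-ω * (Φ ℓ - Φ ρ) ^ (μ - κ)) * F ρ (zb ρ)) :
    ∀ ℓ ∈ Icc a b, z ℓ = zb ℓ := by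
  have hp : 0 < μ - κ := sub_pos.mpr hκμ
  have hμ0 : 0 < μ := hκ0.trans hκμ
  have habI : a ∈ Icc a b := ⟨le_refl a, hab.le⟩
  have hbI : b ∈ Icc a b := ⟨hab.le, le_refl b⟩
  have hΦc : ContinuousOn Φ (Icc a b) := fun x hx => (hΦd x hx).continuousAt.continuousWithinAt
  -- min and max of Φ'
  obtain ⟨xm, hxm, hxmle'⟩ := isCompact_Icc.exists_isMinOn (nonempty_Icc.mpr hab.le) hΦ'c
  obtain ⟨xM, hxM, hxMge'⟩ := isCompact_Icc.exists_isMaxOn (nonempty_Icc.mpr hab.le) hΦ'c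
  have hxmle : ∀ y ∈ Icc a b, Φ' xm ≤ Φ' y := fun y hy => hxmle' hy
  have hxMge : ∀ y ∈ Icc a b, Φ' y ≤ Φ' xM := fun y hy => hxMge' hy
  set m := Φ' xm with hmdef
  set Mb := Φ' xM with hMdef
  have hm : 0 < m := hΦ'pos xm hxm
  have hMb : 0 < Mb := hΦ'pos xM hxM
  -- monotonicity facts via MVT
  have hmono_aux : ∀ g g' : ℝ → ℝ, (∀ x ∈ Icc a b, HasDerivAt g (g' x) x) →
      (∀ x ∈ Icc a b, 0 ≤ g' x) → MonotoneOn g (Icc a b) := by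
    intro g g' hg hg'
    apply monotoneOn_of_deriv_nonneg (convex_Icc a b)
      (fun x hx => (hg x hx).continuousAt.continuousWithinAt)
    · intro x hx
      rw [interior_Icc] at hx
      exact (hg x (Ioo_subset_Icc_self hx)).differentiableAt.differentiableWithinAt
    · intro x hx
      rw [interior_Icc] at hx
      rw [(hg x (Ioo_subset_Icc_self hx)).deriv]
      exact hg' x (Ioo_subset_Icc_self hx)
  have hΦmono : MonotoneOn Φ (Icc a b) :=
    hmono_aux Φ Φ' hΦd (fun x hx => (hΦ'pos x hx).le)
  have hlow : ∀ ρ ∈ Icc a b, ∀ ℓ ∈ Icc a b, ρ ≤ ℓ → m * (ℓ - ρ) ≤ Φ ℓ - Φ ρ := by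
    have hg : MonotoneOn (fun x => Φ x - m * x) (Icc a b) := by
      apply hmono_aux _ (fun x => Φ' x - m)
      · intro x hx
        have h := (hΦd x hx).sub ((hasDerivAt_id' x).const_mul m); rw [mul_one] at h; exact h
      · intro x hx
        have := hxmle x hx; simp only [sub_nonneg]; linarith
    intro ρ hρ ℓ hℓ hρℓ
    have := hg hρ hℓ hρℓ
    simp only at this
    nlinarith
  have hup : ∀ ρ ∈ Icc a b, ∀ ℓ ∈ Icc a b, ρ ≤ ℓ → Φ ℓ - Φ ρ ≤ Mb * (ℓ - ρ) := by
    have hg : MonotoneOn (fun x => Mb * x - Φ x) (Icc a b) := by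
      apply hmono_aux _ (fun x => Mb - Φ' x)
      · intro x hx
        have h := ((hasDerivAt_id' x).const_mul Mb).sub (hΦd x hx); rw [mul_one] at h; exact h
      · intro x hx
        have := hxMge x hx; simp only [sub_nonneg]; linarith
    intro ρ hρ ℓ hℓ hρℓ
    have := hg hρ hℓ hρℓ
    simp only at this
    nlinarith
  -- range bound for the ML argument
  obtain ⟨T, hTdef⟩ : ∃ T : ℝ, T = Φ b - Φ a := ⟨_, rfl⟩
  have hT : 0 < T := by
    rw [hTdef]
    exact lt_of_lt_of_le (by nlinarith : (0:ℝ) < m * (b - a)) (hlow a habI b hbI hab.le)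
  obtain ⟨R, hRdef⟩ : ∃ R : ℝ, R = ω * T ^ (μ - κ) := ⟨_, rfl⟩
  have hR : 0 ≤ R := by rw [hRdef]; positivity
  have hargmem : ∀ ⦃ρ ℓ : ℝ⦄, ρ ∈ Icc a b → ℓ ∈ Icc a b → ρ ≤ ℓ →
      |(-ω) * (Φ ℓ - Φ ρ) ^ (μ - κ)| ≤ R := by
    intro ρ ℓ hρ hℓ hρℓ
    have h0 : 0 ≤ Φ ℓ - Φ ρ := sub_nonneg.mpr (hΦmono hρ hℓ hρℓ)
    have h1 : Φ ℓ - Φ ρ ≤ T := by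
      have h2 := hΦmono habI hρ hρ.1
      have h3 := hΦmono hℓ hbI hℓ.2
      rw [hTdef]; linarith
    rw [abs_mul, abs_neg, abs_of_pos hω, abs_of_nonneg (Real.rpow_nonneg h0 _), hRdef]
    exact mul_le_mul_of_nonneg_left (Real.rpow_le_rpow h0 h1 hp.le) hω.le
  -- the uniform Mittag-Leffler bound
  obtain ⟨CE, hCEdef⟩ : ∃ CE : ℝ, CE = ∑' k : ℕ, R ^ k / Real.Gamma ((μ - κ) * k + μ) := ⟨_, rfl⟩
  have hCE : ∀ ⦃ρ ℓ : ℝ⦄, ρ ∈ Icc a b → ℓ ∈ Icc a b → ρ ≤ ℓ →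
      |mittagLeffler (μ - κ) μ (-ω * (Φ ℓ - Φ ρ) ^ (μ - κ))| ≤ CE := by
    intro ρ ℓ hρ hℓ hρℓ
    rw [hCEdef]
    exact ML_bound hp hμ0 (hargmem hρ hℓ hρℓ)
  have hCEpos : 0 < CE := by
    have h0 : (0:ℝ) < R ^ (0:ℕ) / Real.Gamma ((μ - κ) * (0:ℕ) + μ) := by
      simp only [pow_zero, Nat.cast_zero, mul_zero, zero_add]
      exact div_pos one_pos (Real.Gamma_pos_of_pos hμ0)
    rw [hCEdef]
    refine lt_of_lt_of_le h0 (Summable.le_tsum (summable_ML hp hμ0 hR) 0 ?_)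
    intro k _
    exact div_nonneg (pow_nonneg hR k) (Real.Gamma_pos_of_pos (by positivity)).le
  -- pointwise kernel bound
  have hKbd : ∀ ⦃ρ ℓ : ℝ⦄, ρ ∈ Icc a b → ℓ ∈ Icc a b → ρ ≤ ℓ →
      |Φ' ρ * (Φ ℓ - Φ ρ) ^ (μ - 1) *
        mittagLeffler (μ - κ) μ (-ω * (Φ ℓ - Φ ρ) ^ (μ - κ))| ≤
      Mb * CE * m ^ (μ - 1) * (ℓ - ρ) ^ (μ - 1) := by
    intro ρ ℓ hρ hℓ hρℓ
    have h0 : 0 ≤ Φ ℓ - Φ ρ := sub_nonneg.mpr (hΦmono hρ hℓ hρℓ)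
    have hpow : (Φ ℓ - Φ ρ) ^ (μ - 1) ≤ m ^ (μ - 1) * (ℓ - ρ) ^ (μ - 1) := by
      rcases eq_or_lt_of_le hρℓ with rfl | hlt
      · rw [sub_self, sub_self, Real.zero_rpow (sub_ne_zero_of_ne (ne_of_lt hμ1))]
        positivity
      · have hml : 0 < m * (ℓ - ρ) := by nlinarith
        calc (Φ ℓ - Φ ρ) ^ (μ - 1) ≤ (m * (ℓ - ρ)) ^ (μ - 1) :=
              Real.rpow_le_rpow_of_nonpos hml (hlow ρ hρ ℓ hℓ hρℓ) (by linarith)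
        _ = m ^ (μ - 1) * (ℓ - ρ) ^ (μ - 1) := Real.mul_rpow hm.le (by linarith)
    have hΦ'bd : |Φ' ρ| ≤ Mb := by
      rw [abs_of_pos (hΦ'pos ρ hρ)]; exact hxMge ρ hρ
    calc |Φ' ρ * (Φ ℓ - Φ ρ) ^ (μ - 1) * mittagLeffler (μ - κ) μ (-ω * (Φ ℓ - Φ ρ) ^ (μ - κ))|
        = |Φ' ρ| * |(Φ ℓ - Φ ρ) ^ (μ - 1)| * |mittagLeffler (μ - κ) μ (-ω * (Φ ℓ - Φ ρ) ^ (μ - κ))| := by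
          rw [abs_mul, abs_mul]
    _ ≤ Mb * (m ^ (μ - 1) * (ℓ - ρ) ^ (μ - 1)) * CE := by
        apply mul_le_mul _ (hCE hρ hℓ hρℓ) (abs_nonneg _)
          (mul_nonneg hMb.le (mul_nonneg (Real.rpow_nonneg hm.le _)
            (Real.rpow_nonneg (sub_nonneg.mpr hρℓ) _)))
        apply mul_le_mul hΦ'bd _ (abs_nonneg _) hMb.le
        rw [abs_of_nonneg (Real.rpow_nonneg h0 _)]
        exact hpow
    _ = Mb * CE * m ^ (μ - 1) * (ℓ - ρ) ^ (μ - 1) := by ring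
  -- continuity of the kernel on Ioo a ℓ, and of the ML composition on Icc a ℓ
  have hEcont : ∀ ℓ ∈ Icc a b, ContinuousOn
      (fun ρ => mittagLeffler (μ - κ) μ (-ω * (Φ ℓ - Φ ρ) ^ (μ - κ))) (Icc a ℓ) := by
    intro ℓ hℓ
    have hsub : Icc a ℓ ⊆ Icc a b := Icc_subset_Icc (le_refl a) hℓ.2
    have hinner : ContinuousOn (fun ρ => -ω * (Φ ℓ - Φ ρ) ^ (μ - κ)) (Icc a ℓ) := by
      apply ContinuousOn.mul continuousOn_const
      intro ρ hρ
      exact (Real.continuousAt_rpow_const _ _ (Or.inr hp.le)).continuousWithinAt.comp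
        ((continuousOn_const.sub (hΦc.mono hsub)) ρ hρ) (mapsTo_univ _ _)
    apply (ML_continuousOn hp hμ0 hR).comp hinner
    intro ρ hρ
    have := hargmem (hsub hρ) hℓ hρ.2
    exact abs_le.mp (by simpa using this)
  -- integrability of the full integrand
  have hInt : ∀ w : ℝ → ℝ, ContinuousOn w (Icc a b) → ∀ ℓ ∈ Icc a b,
      IntervalIntegrable (fun ρ => Φ' ρ * (Φ ℓ - Φ ρ) ^ (μ - 1) *
        mittagLeffler (μ - κ) μ (-ω * (Φ ℓ - Φ ρ) ^ (μ - κ)) * F ρ (w ρ)) volume a ℓ := by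
    intro w hwc ℓ hℓ
    have haℓ : a ≤ ℓ := hℓ.1
    have hsub : Icc a ℓ ⊆ Icc a b := Icc_subset_Icc (le_refl a) hℓ.2
    have hwF : ContinuousOn (fun ρ => F ρ (w ρ)) (Icc a b) :=
      hFc.comp (continuousOn_id.prodMk hwc) (fun ρ hρ => ⟨hρ, mem_univ _⟩)
    obtain ⟨xF, hxF, hxFge'⟩ := isCompact_Icc.exists_isMaxOn (nonempty_Icc.mpr hab.le) hwF.abs
    have hxFge : ∀ ρ ∈ Icc a b, |F ρ (w ρ)| ≤ |F xF (w xF)| := fun ρ hρ => hxFge' hρ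
    set MF := |F xF (w xF)| + 1 with hMFdef
    have hMF : 0 < MF := by positivity
    have hMFb : ∀ ρ ∈ Icc a b, |F ρ (w ρ)| ≤ MF := by
      intro ρ hρ; have := hxFge ρ hρ; linarith
    rw [intervalIntegrable_iff_integrableOn_Ioo_of_le haℓ]
    have hbint : IntegrableOn (fun ρ => (Mb * CE * m ^ (μ - 1) * MF) * (ℓ - ρ) ^ (μ - 1))
        (Ioo a ℓ) volume := by
      have hb1 : IntervalIntegrable (fun s : ℝ => s ^ (μ - 1)) volume 0 (ℓ - a) :=
        intervalIntegral.intervalIntegrable_rpow' (by linarith)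
      have hb2 := (hb1.comp_sub_left ℓ).symm
      simp only [sub_zero, sub_sub_cancel] at hb2
      exact ((intervalIntegrable_iff_integrableOn_Ioo_of_le haℓ).mp (hb2.const_mul _))
    apply Integrable.mono hbint
    · -- measurability via continuity on Ioo
      apply ContinuousOn.aestronglyMeasurable _ measurableSet_Ioo
      have hsub' : Ioo a ℓ ⊆ Icc a ℓ := Ioo_subset_Icc_self
      apply ContinuousOn.mul
      apply ContinuousOn.mul
      apply ContinuousOn.mul
      · exact (hΦ'c.mono (hsub'.trans hsub))
      · intro ρ hρ
        have hpos : 0 < Φ ℓ - Φ ρ := by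
          have := hlow ρ (hsub (hsub' hρ)) ℓ hℓ hρ.2.le
          nlinarith [hρ.2]
        have h1 : ContinuousWithinAt (fun ρ => Φ ℓ - Φ ρ) (Ioo a ℓ) ρ :=
          (continuousOn_const.sub ((hΦc.mono hsub).mono hsub')) ρ hρ
        show ContinuousWithinAt ((fun x : ℝ => x ^ (μ - 1)) ∘ (fun ρ => Φ ℓ - Φ ρ)) (Ioo a ℓ) ρ
        refine ContinuousAt.comp_continuousWithinAt ?_ h1
        exact Real.continuousAt_rpow_const _ _ (Or.inl hpos.ne')
      · exact (hEcont ℓ hℓ).mono hsub'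
      · exact hwF.mono (hsub'.trans hsub)
    · apply (ae_restrict_iff' measurableSet_Ioo).mpr (Filter.Eventually.of_forall _)
      intro ρ hρ
      have hρI : ρ ∈ Icc a b := hsub (Ioo_subset_Icc_self hρ)
      rw [Real.norm_eq_abs, Real.norm_eq_abs, abs_mul]
      calc |Φ' ρ * (Φ ℓ - Φ ρ) ^ (μ - 1) *
          mittagLeffler (μ - κ) μ (-ω * (Φ ℓ - Φ ρ) ^ (μ - κ))| * |F ρ (w ρ)|
          ≤ (Mb * CE * m ^ (μ - 1) * (ℓ - ρ) ^ (μ - 1)) * MF := by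
            apply mul_le_mul (hKbd hρI hℓ hρ.2.le) (hMFb ρ hρI) (abs_nonneg _)
            exact mul_nonneg (mul_nonneg (mul_nonneg hMb.le hCEpos.le)
              (Real.rpow_nonneg hm.le _)) (Real.rpow_nonneg (sub_nonneg.mpr hρ.2.le) _)
      _ = (Mb * CE * m ^ (μ - 1) * MF) * (ℓ - ρ) ^ (μ - 1) := by ring
      _ ≤ |(Mb * CE * m ^ (μ - 1) * MF) * (ℓ - ρ) ^ (μ - 1)| := le_abs_self _
  -- the key estimate
  obtain ⟨B, hBdef⟩ : ∃ B : ℝ, B = L * (Mb * CE * m ^ (μ - 1)) := ⟨_, rfl⟩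
  have hB : 0 < B := by
    rw [hBdef]
    exact mul_pos hL (mul_pos (mul_pos hMb hCEpos) (Real.rpow_pos_of_pos hm _))
  have hkey : ∀ c ∈ Icc a b, ∀ ℓ ∈ Icc a b, c ≤ ℓ → (∀ x ∈ Icc a c, z x = zb x) →
      ∀ Wm, 0 ≤ Wm → (∀ ρ ∈ Icc c ℓ, |z ρ - zb ρ| ≤ Wm) →
      |z ℓ - zb ℓ| ≤ B * ((ℓ - c) ^ μ / μ) * Wm := by
    intro c hc ℓ hℓ hcℓ heq Wm hWm hWb
    have haℓ : a ≤ ℓ := hℓ.1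
    have hac : a ≤ c := hc.1
    have hIz := hInt z hzc ℓ hℓ
    have hIzb := hInt zb hzbc ℓ hℓ
    have hId := hIz.sub hIzb
    have hsubset : Set.uIcc a c ⊆ Set.uIcc a ℓ := by
      rw [uIcc_of_le hac, uIcc_of_le haℓ]
      exact Icc_subset_Icc (le_refl a) hcℓ
    have hsubset2 : Set.uIcc c ℓ ⊆ Set.uIcc a ℓ := by
      rw [uIcc_of_le hcℓ, uIcc_of_le haℓ]
      exact Icc_subset_Icc hac (le_refl ℓ)
    have hdiff : z ℓ - zb ℓ = ∫ ρ in c..ℓ,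
        (Φ' ρ * (Φ ℓ - Φ ρ) ^ (μ - 1) *
          mittagLeffler (μ - κ) μ (-ω * (Φ ℓ - Φ ρ) ^ (μ - κ)) * F ρ (z ρ) -
         Φ' ρ * (Φ ℓ - Φ ρ) ^ (μ - 1) *
          mittagLeffler (μ - κ) μ (-ω * (Φ ℓ - Φ ρ) ^ (μ - κ)) * F ρ (zb ρ)) := by
      have h1 : z ℓ - zb ℓ = ∫ ρ in a..ℓ,
          (Φ' ρ * (Φ ℓ - Φ ρ) ^ (μ - 1) *
            mittagLeffler (μ - κ) μ (-ω * (Φ ℓ - Φ ρ) ^ (μ - κ)) * F ρ (z ρ) -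
           Φ' ρ * (Φ ℓ - Φ ρ) ^ (μ - 1) *
            mittagLeffler (μ - κ) μ (-ω * (Φ ℓ - Φ ρ) ^ (μ - κ)) * F ρ (zb ρ)) := by
        rw [intervalIntegral.integral_sub hIz hIzb, hz ℓ hℓ, hzb ℓ hℓ]
        ring
      have h2 : (∫ ρ in a..c,
          (Φ' ρ * (Φ ℓ - Φ ρ) ^ (μ - 1) *
            mittagLeffler (μ - κ) μ (-ω * (Φ ℓ - Φ ρ) ^ (μ - κ)) * F ρ (z ρ) -
           Φ' ρ * (Φ ℓ - Φ ρ) ^ (μ - 1) *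
            mittagLeffler (μ - κ) μ (-ω * (Φ ℓ - Φ ρ) ^ (μ - κ)) * F ρ (zb ρ))) = 0 := by
        rw [show (0:ℝ) = ∫ ρ in a..c, (0:ℝ) by simp]
        apply intervalIntegral.integral_congr
        intro x hx
        rw [uIcc_of_le hac] at hx
        have := heq x hx
        simp [this]
      have h3 := intervalIntegral.integral_add_adjacent_intervals
        (hId.mono_set hsubset) (hId.mono_set hsubset2)
      rw [h1, ← h3, h2, zero_add]
    rw [hdiff]
    have hbd : ∀ ρ ∈ Set.Ioc c ℓ,
        ‖Φ' ρ * (Φ ℓ - Φ ρ) ^ (μ - 1) *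
          mittagLeffler (μ - κ) μ (-ω * (Φ ℓ - Φ ρ) ^ (μ - κ)) * F ρ (z ρ) -
         Φ' ρ * (Φ ℓ - Φ ρ) ^ (μ - 1) *
          mittagLeffler (μ - κ) μ (-ω * (Φ ℓ - Φ ρ) ^ (μ - κ)) * F ρ (zb ρ)‖ ≤
        (B * Wm) * (ℓ - ρ) ^ (μ - 1) := by
      intro ρ hρ
      have hρI : ρ ∈ Icc a b := ⟨hac.trans hρ.1.le, hρ.2.trans hℓ.2⟩
      rw [Real.norm_eq_abs, ← mul_sub, abs_mul]
      calc |Φ' ρ * (Φ ℓ - Φ ρ) ^ (μ - 1) *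
          mittagLeffler (μ - κ) μ (-ω * (Φ ℓ - Φ ρ) ^ (μ - κ))| * |F ρ (z ρ) - F ρ (zb ρ)|
          ≤ (Mb * CE * m ^ (μ - 1) * (ℓ - ρ) ^ (μ - 1)) * (L * Wm) := by
            apply mul_le_mul (hKbd hρI hℓ hρ.2) _ (abs_nonneg _)
              (mul_nonneg (mul_nonneg (mul_nonneg hMb.le hCEpos.le)
                (Real.rpow_nonneg hm.le _)) (Real.rpow_nonneg (sub_nonneg.mpr hρ.2) _))
            calc |F ρ (z ρ) - F ρ (zb ρ)| ≤ L * |z ρ - zb ρ| := hlip ρ hρI (zb ρ) (z ρ)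
            _ ≤ L * Wm := mul_le_mul_of_nonneg_left (hWb ρ ⟨hρ.1.le, hρ.2⟩) hL.le
      _ = (B * Wm) * (ℓ - ρ) ^ (μ - 1) := by rw [hBdef]; ring
    have hgint : IntervalIntegrable (fun ρ => (B * Wm) * (ℓ - ρ) ^ (μ - 1)) volume c ℓ := by
      have hb1 : IntervalIntegrable (fun s : ℝ => s ^ (μ - 1)) volume 0 (ℓ - c) :=
        intervalIntegral.intervalIntegrable_rpow' (by linarith)
      have hb2 := (hb1.comp_sub_left ℓ).symm
      simp only [sub_zero, sub_sub_cancel] at hb2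
      exact hb2.const_mul _
    have hmain := intervalIntegral.norm_integral_le_of_norm_le
      (μ := volume) (f := fun ρ =>
        Φ' ρ * (Φ ℓ - Φ ρ) ^ (μ - 1) *
          mittagLeffler (μ - κ) μ (-ω * (Φ ℓ - Φ ρ) ^ (μ - κ)) * F ρ (z ρ) -
        Φ' ρ * (Φ ℓ - Φ ρ) ^ (μ - 1) *
          mittagLeffler (μ - κ) μ (-ω * (Φ ℓ - Φ ρ) ^ (μ - κ)) * F ρ (zb ρ))
      (a := c) (b := ℓ) hcℓ ?_ hgint
    · refine le_trans hmain ?_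
      have hval : (∫ ρ in c..ℓ, (B * Wm) * (ℓ - ρ) ^ (μ - 1)) =
          (B * Wm) * ((ℓ - c) ^ μ / μ) := by
        rw [intervalIntegral.integral_const_mul]
        congr 1
        have hcomp := intervalIntegral.integral_comp_sub_left (a := c) (b := ℓ)
          (fun s => s ^ (μ - 1)) ℓ
        rw [hcomp, sub_self, integral_rpow (Or.inl (by linarith : (-1:ℝ) < μ - 1))]
        rw [Real.zero_rpow (show μ - 1 + 1 ≠ 0 by rw [sub_add_cancel]; exact hμ0.ne'),
          sub_add_cancel, sub_zero]
      rw [hval]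
      apply le_of_eq; ring
    · exact Filter.Eventually.of_forall hbd
  -- choose the step size
  obtain ⟨h, hhdef⟩ : ∃ h : ℝ, h = (μ / (2 * B)) ^ (μ⁻¹ : ℝ) := ⟨_, rfl⟩
  have hh : 0 < h := by
    rw [hhdef]
    exact Real.rpow_pos_of_pos (div_pos hμ0 (by linarith)) _
  have hhμ : h ^ μ = μ / (2 * B) := by
    rw [hhdef]
    exact Real.rpow_inv_rpow (le_of_lt (div_pos hμ0 (by linarith))) hμ0.ne'
  -- the induction
  have main : ∀ j : ℕ, ∀ ℓ ∈ Icc a (min b (a + j * h)), z ℓ = zb ℓ := by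
    intro j
    induction j with
    | zero =>
      intro ℓ hℓ
      have hℓa : ℓ = a := le_antisymm (hℓ.2.trans (by simp)) hℓ.1
      subst hℓa
      rw [hz ℓ ⟨le_refl ℓ, hab.le⟩, hzb ℓ ⟨le_refl ℓ, hab.le⟩,
        intervalIntegral.integral_same, intervalIntegral.integral_same]
    | succ j ih =>
      set c := min b (a + j * h) with hcdef
      set d := min b (a + (j + 1 : ℕ) * h) with hddef
      have hjh : (0:ℝ) ≤ j * h := by positivity
      have hca : a ≤ c := le_min hab.le (by linarith)
      have hcb : c ≤ b := min_le_left _ _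
      have hcd : c ≤ d := by
        apply le_min (min_le_left _ _)
        calc c ≤ a + j * h := min_le_right _ _
        _ ≤ a + (j + 1 : ℕ) * h := by push_cast; nlinarith
      have hdb : d ≤ b := min_le_left _ _
      have hdch : d - c ≤ h := by
        by_cases h1 : b ≤ a + j * h
        · have hcb' : c = b := min_eq_left h1
          have : d ≤ b := min_le_left _ _
          rw [hcb']; linarith
        · push_neg at h1
          have hcc : c = a + j * h := min_eq_right h1.le
          have : d ≤ a + (j + 1 : ℕ) * h := min_le_right _ _
          rw [hcc]; push_cast at this ⊢; nlinarith
      have hWcont : ContinuousOn (fun x => |z x - zb x|) (Icc c d) :=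
        ((hzc.sub hzbc).abs).mono (Icc_subset_Icc hca hdb)
      obtain ⟨u, hu, hmax'⟩ := isCompact_Icc.exists_isMaxOn (nonempty_Icc.mpr hcd) hWcont
      have hmax : ∀ x ∈ Icc c d, |z x - zb x| ≤ |z u - zb u| := fun x hx => hmax' hx
      have hub : u ∈ Icc a b := ⟨hca.trans hu.1, hu.2.trans hdb⟩
      have hu0 : |z u - zb u| = 0 := by
        have hest := hkey c ⟨hca, hcb⟩ u hub hu.1 ih (|z u - zb u|) (abs_nonneg _)
          (fun ρ hρ => hmax ρ ⟨hρ.1, hρ.2.trans hu.2⟩)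
        have h1 : (u - c) ^ μ ≤ μ / (2 * B) := by
          rw [← hhμ]
          exact Real.rpow_le_rpow (sub_nonneg.mpr hu.1) (by linarith [hu.2]) hμ0.le
        have h2 : B * ((u - c) ^ μ / μ) * |z u - zb u| ≤ (1/2) * |z u - zb u| := by
          apply mul_le_mul_of_nonneg_right _ (abs_nonneg _)
          calc B * ((u - c) ^ μ / μ) ≤ B * ((μ / (2 * B)) / μ) := by
                apply mul_le_mul_of_nonneg_left _ hB.le
                exact div_le_div_of_nonneg_right h1 hμ0.le
          _ = 1/2 := by field_simp
        have := hest.trans h2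
        linarith [abs_nonneg (z u - zb u)]
      intro ℓ hℓ
      rcases le_total ℓ c with h1 | h1
      · exact ih ℓ ⟨hℓ.1, h1⟩
      · have hℓcd : ℓ ∈ Icc c d := ⟨h1, hℓ.2⟩
        have := (hmax ℓ hℓcd).trans_eq hu0
        have h0 : |z ℓ - zb ℓ| = 0 := le_antisymm this (abs_nonneg _)
        have := abs_eq_zero.mp h0
        linarith
  intro ℓ hℓ
  obtain ⟨j, hj⟩ := exists_nat_ge ((b - a) / h)
  apply main j
  have hble : b ≤ a + j * h := by
    rw [div_le_iff₀ hh] at hj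
    linarith
  rw [min_eq_left hble]
  exact hℓ
end

section
/- Uniqueness in the sector: Let 0 < κ < μ < 1, ω > 0, z_a ∈ ℝ, and let F : [a,b] × ℝ → ℝ be continuous. Suppose z₀ is a lower solution and z̃₀ is an upper solution of the problem with z₀(ℓ) ≤ z̃₀(ℓ) for all ℓ ∈ [a,b], and there exists M ≥ 0 such that 0 ≤ F(ℓ,y) − F(ℓ,x) ≤ M(y − x) whenever z₀(ℓ) ≤ x ≤ y ≤ z̃₀(ℓ). If z and z̄ are continuous solutions of the integral equation z(ℓ) = z_a + ∫_a^ℓ Φ'(ρ)(Φ(ℓ)−Φ(ρ))^{μ−1} E_{μ−κ,μ}(−ω(Φ(ℓ)−Φ(ρ))^{μ−κ}) F(ρ, z(ρ)) dρ on [a,b] with z₀ ≤ z ≤ z̃₀ and z₀ ≤ z̄ ≤ z̃₀ pointwise, then z(ℓ) = z̄(ℓ) for all ℓ ∈ [a,b]; i.e., the problem has a unique solution in the sector [z₀, z̃₀]. -/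
open Real MeasureTheory Set

open Filter in
lemma ml_summable {p q X : ℝ} (hp : 0 < p) (hq : 0 < q) (hX : 0 ≤ X) :
    Summable (fun k : ℕ => X ^ k / Real.Gamma (p * k + q)) := by
  apply summable_of_ratio_norm_eventually_le (r := 1/2) (by norm_num)
  have htend : Tendsto (fun k : ℕ => p * k + q) atTop atTop := by
    apply Tendsto.atTop_add _ tendsto_const_nhds
    exact (tendsto_natCast_atTop_atTop).const_mul_atTop hp
  filter_upwards [htend.eventually_ge_atTop (max 2 ((2*X+1) ^ (1/p) + 1))] with k hk
  set t := p * k + q with ht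
  have ht2 : 2 ≤ t := le_trans (le_max_left _ _) hk
  have ht1 : (2*X+1) ^ (1/p) + 1 ≤ t := le_trans (le_max_right _ _) hk
  have hΓt : 0 < Real.Gamma t := Real.Gamma_pos_of_pos (by linarith)
  have hΓtp : 0 < Real.Gamma (t + p) := Real.Gamma_pos_of_pos (by linarith)
  have ht1pos : 0 < t - 1 := by linarith
  -- Gamma ratio lower bound via log-convexity
  have hslope := Real.convexOn_log_Gamma.slope_mono_adjacent
    (x := t - 1) (y := t) (z := t + p)
    (by simp only [mem_Ioi]; linarith) (by simp only [mem_Ioi]; linarith)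
    (by linarith) (by linarith)
  have hgam : Real.Gamma t = (t - 1) * Real.Gamma (t - 1) := by
    have h := Real.Gamma_add_one (show t - 1 ≠ 0 by intro h; rw [h] at ht1pos; simp at ht1pos)
    rwa [sub_add_cancel] at h
  have hΓt1 : 0 < Real.Gamma (t - 1) := Real.Gamma_pos_of_pos (by linarith)
  have hlog : Real.log (t - 1) ≤ (Real.log (Real.Gamma (t + p)) - Real.log (Real.Gamma t)) / p := by
    have h1 : ((Real.log ∘ Real.Gamma) t - (Real.log ∘ Real.Gamma) (t-1)) / (t - (t-1)) =
        Real.log (t - 1) := by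
      simp only [Function.comp]
      rw [hgam, Real.log_mul (by linarith) hΓt1.ne']
      ring
    calc Real.log (t-1) = _ := h1.symm
      _ ≤ _ := hslope
      _ = _ := by simp [Function.comp]
  have hratio : (2*X+1) * Real.Gamma t ≤ Real.Gamma (t + p) := by
    have h2 : (2*X+1) ≤ (t-1) ^ p := by
      have h3 : ((2*X+1) ^ (1/p)) ^ p ≤ (t-1) ^ p :=
        Real.rpow_le_rpow (Real.rpow_nonneg (by linarith) _) (by linarith) hp.le
      rwa [← Real.rpow_mul (by linarith), one_div, inv_mul_cancel₀ hp.ne', Real.rpow_one] at h3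
    have h4 : Real.log ((2*X+1) * Real.Gamma t) ≤ Real.log (Real.Gamma (t + p)) := by
      rw [Real.log_mul (by linarith) hΓt.ne']
      have h5 : Real.log (2*X+1) ≤ p * Real.log (t-1) := by
        calc Real.log (2*X+1) ≤ Real.log ((t-1)^p) := Real.log_le_log (by linarith) h2
          _ = p * Real.log (t-1) := Real.log_rpow ht1pos p
      have h6 := (le_div_iff₀ hp).mp hlog
      nlinarith [h5, h6]
    exact (Real.log_le_log_iff (by positivity) hΓtp).mp h4
  -- conclude ratio test inequality
  have hcast : p * ((k : ℝ) + 1) + q = t + p := by rw [ht]; ring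
  push_cast
  rw [hcast]
  have hXk : (0:ℝ) ≤ X ^ k := by positivity
  have main : X ^ (k+1) * (2 * Real.Gamma t) ≤ X ^ k * Real.Gamma (t + p) := by
    have h7 := mul_le_mul_of_nonneg_left hratio hXk
    have h8 : (0:ℝ) ≤ X ^ k * Real.Gamma t := mul_nonneg hXk hΓt.le
    rw [pow_succ]; nlinarith [h7, h8]
  rw [Real.norm_eq_abs, Real.norm_eq_abs, abs_of_nonneg (by positivity), abs_of_nonneg (by positivity)]
  have h2' : (1:ℝ)/2 * (X ^ k / Real.Gamma t) = X ^ k / (2 * Real.Gamma t) := by ring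
  rw [h2', div_le_div_iff₀ hΓtp (by positivity)]
  linarith [main]

open Filter in
lemma ml_summable_at {p q X x : ℝ} (hp : 0 < p) (hq : 0 < q) (hX : 0 ≤ X) (hx : |x| ≤ X) :
    Summable (fun k : ℕ => x ^ k / Real.Gamma (p * k + q)) := by
  apply Summable.of_norm_bounded (ml_summable hp hq hX)
  intro k
  have hΓ : 0 < Real.Gamma (p * k + q) := Real.Gamma_pos_of_pos (by positivity)
  rw [Real.norm_eq_abs, abs_div, abs_pow, abs_of_pos hΓ]
  gcongr

open Filter in
lemma ml_nonneg {p q X : ℝ} (hp : 0 < p) (hq : 0 < q) (hX : 0 ≤ X) :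
    0 ≤ mittagLeffler p q X := by
  apply tsum_nonneg
  intro k
  have hΓ : 0 < Real.Gamma (p * k + q) := Real.Gamma_pos_of_pos (by positivity)
  positivity

open Filter in
lemma ml_abs_le {p q X x : ℝ} (hp : 0 < p) (hq : 0 < q) (hX : 0 ≤ X) (hx : |x| ≤ X) :
    |mittagLeffler p q x| ≤ mittagLeffler p q X := by
  have hsum := ml_summable_at hp hq hX hx
  have hsumX := ml_summable hp hq hX
  calc |mittagLeffler p q x| ≤ ∑' k : ℕ, ‖x ^ k / Real.Gamma (p * k + q)‖ :=
        norm_tsum_le_tsum_norm hsum.norm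
    _ ≤ mittagLeffler p q X := by
        apply Summable.tsum_le_tsum _ hsum.norm hsumX
        intro k
        have hΓ : 0 < Real.Gamma (p * k + q) := Real.Gamma_pos_of_pos (by positivity)
        rw [Real.norm_eq_abs, abs_div, abs_pow, abs_of_pos hΓ]
        gcongr
        

open Filter in
lemma ml_continuousOn {p q X : ℝ} (hp : 0 < p) (hq : 0 < q) (hX : 0 ≤ X) :
    ContinuousOn (mittagLeffler p q) (Icc (-X) X) := by
  have : ContinuousOn (fun x : ℝ => ∑' k : ℕ, x ^ k / Real.Gamma (p * k + q)) (Icc (-X) X) := by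
    apply continuousOn_tsum (u := fun k : ℕ => X ^ k / Real.Gamma (p * k + q))
      (fun k => ((continuous_pow k).div_const _).continuousOn) (ml_summable hp hq hX)
    intro k x hx
    have hΓ : 0 < Real.Gamma (p * k + q) := Real.Gamma_pos_of_pos (by positivity)
    rw [Real.norm_eq_abs, abs_div, abs_pow, abs_of_pos hΓ]
    gcongr
    exact abs_le.mpr hx
  exact this


/-- Uniqueness in the sector: under the lower/upper solution
hypotheses and the one-sided Lipschitz condition
`0 ≤ F(ℓ,y) − F(ℓ,x) ≤ M(y − x)` in the sector, any two continuous solutions of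
the integral equation lying in the sector `[z₀, z̃₀]` coincide on `[a,b]`. -/
theorem uniqueness_in_sector
    (a b : ℝ) (hab : a < b)
    (Φ Φ' : ℝ → ℝ)
    (hΦd : ∀ x ∈ Icc a b, HasDerivAt Φ (Φ' x) x)
    (hΦ'c : ContinuousOn Φ' (Icc a b))
    (hΦ'pos : ∀ x ∈ Icc a b, 0 < Φ' x)
    (μ κ ω za : ℝ) (hκ0 : 0 < κ) (hκμ : κ < μ) (hμ1 : μ < 1) (hω : 0 < ω)
    (F : ℝ → ℝ → ℝ)
    (hFc : ContinuousOn (fun p : ℝ × ℝ => F p.1 p.2) (Icc a b ×ˢ (univ : Set ℝ)))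
    -- z₀ is a lower solution:
    (z₀ z₀' : ℝ → ℝ)
    (hz₀d : ∀ x ∈ Icc a b, HasDerivAt z₀ (z₀' x) x)
    (hz₀'c : ContinuousOn z₀' (Icc a b))
    (hlow : ∀ ℓ ∈ Icc a b,
      (1 / Real.Gamma (1 - μ)) * (∫ ρ in a..ℓ, (Φ ℓ - Φ ρ) ^ (-μ) * z₀' ρ)
        + ω * ((1 / Real.Gamma (1 - κ)) * ∫ ρ in a..ℓ, (Φ ℓ - Φ ρ) ^ (-κ) * z₀' ρ)
      ≤ F ℓ (z₀ ℓ))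
    (hlowa : z₀ a ≤ za)
    -- z̃₀ is an upper solution:
    (zt₀ zt₀' : ℝ → ℝ)
    (hzt₀d : ∀ x ∈ Icc a b, HasDerivAt zt₀ (zt₀' x) x)
    (hzt₀'c : ContinuousOn zt₀' (Icc a b))
    (hup : ∀ ℓ ∈ Icc a b,
      F ℓ (zt₀ ℓ) ≤
        (1 / Real.Gamma (1 - μ)) * (∫ ρ in a..ℓ, (Φ ℓ - Φ ρ) ^ (-μ) * zt₀' ρ)
          + ω * ((1 / Real.Gamma (1 - κ)) * ∫ ρ in a..ℓ, (Φ ℓ - Φ ρ) ^ (-κ) * zt₀' ρ))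
    (hupa : za ≤ zt₀ a)
    (hord : ∀ ℓ ∈ Icc a b, z₀ ℓ ≤ zt₀ ℓ)
    -- one-sided Lipschitz condition in the sector:
    (M : ℝ) (hM : 0 ≤ M)
    (hF : ∀ ℓ ∈ Icc a b, ∀ x y : ℝ, z₀ ℓ ≤ x → x ≤ y → y ≤ zt₀ ℓ →
      0 ≤ F ℓ y - F ℓ x ∧ F ℓ y - F ℓ x ≤ M * (y - x))
    -- z and z̄ are continuous solutions in the sector:
    (z zb : ℝ → ℝ)
    (hzc : ContinuousOn z (Icc a b)) (hzbc : ContinuousOn zb (Icc a b))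
    (hzsec : ∀ ℓ ∈ Icc a b, z₀ ℓ ≤ z ℓ ∧ z ℓ ≤ zt₀ ℓ)
    (hzbsec : ∀ ℓ ∈ Icc a b, z₀ ℓ ≤ zb ℓ ∧ zb ℓ ≤ zt₀ ℓ)
    (hz : ∀ ℓ ∈ Icc a b,
      z ℓ = za + ∫ ρ in a..ℓ,
        Φ' ρ * (Φ ℓ - Φ ρ) ^ (μ - 1) *
          mittagLeffler (μ - κ) μ (-ω * (Φ ℓ - Φ ρ) ^ (μ - κ)) * F ρ (z ρ))
    (hzb : ∀ ℓ ∈ Icc a b,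
      zb ℓ = za + ∫ ρ in a..ℓ,
        Φ' ρ * (Φ ℓ - Φ ρ) ^ (μ - 1) *
          mittagLeffler (μ - κ) μ (-ω * (Φ ℓ - Φ ρ) ^ (μ - κ)) * F ρ (zb ρ)) :
    ∀ ℓ ∈ Icc a b, z ℓ = zb ℓ := by
  have hμ0 : 0 < μ := hκ0.trans hκμ
  have hp : 0 < μ - κ := sub_pos.2 hκμ
  have haI : a ∈ Icc a b := ⟨le_refl a, hab.le⟩
  have hbI : b ∈ Icc a b := ⟨hab.le, le_refl b⟩
  -- continuity and monotonicity of Φ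
  have hΦc : ContinuousOn Φ (Icc a b) := fun x hx => (hΦd x hx).continuousAt.continuousWithinAt
  have hΦmono : StrictMonoOn Φ (Icc a b) := by
    apply strictMonoOn_of_deriv_pos (convex_Icc a b) hΦc
    intro x hx
    rw [interior_Icc] at hx
    rw [(hΦd x (Ioo_subset_Icc_self hx)).deriv]
    exact hΦ'pos x (Ioo_subset_Icc_self hx)
  have hΦle : ∀ {s t : ℝ}, s ∈ Icc a b → t ∈ Icc a b → s ≤ t → Φ s ≤ Φ t := by
    intro s t hs ht hst
    rcases eq_or_lt_of_le hst with h | h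
    · rw [h]
    · exact (hΦmono hs ht h).le
  set X := ω * (Φ b - Φ a) ^ (μ - κ) with hXdef
  have hX : 0 ≤ X := mul_nonneg hω.le (Real.rpow_nonneg (sub_nonneg.2 (hΦle haI hbI hab.le)) _)
  set C := mittagLeffler (μ - κ) μ X with hCdef
  have hC0 : 0 ≤ C := ml_nonneg hp hμ0 hX
  -- bound on the Mittag-Leffler argument and factor
  have heX : ∀ ℓ ∈ Icc a b, ∀ ρ ∈ Icc a ℓ,
      |(-ω * (Φ ℓ - Φ ρ) ^ (μ - κ))| ≤ X := by
    intro ℓ hℓ ρ hρ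
    have hρI : ρ ∈ Icc a b := ⟨hρ.1, hρ.2.trans hℓ.2⟩
    have h1 : Φ ρ ≤ Φ ℓ := hΦle hρI hℓ hρ.2
    have h2 : Φ ℓ - Φ ρ ≤ Φ b - Φ a :=
      sub_le_sub (hΦle hℓ hbI hℓ.2) (hΦle haI hρI hρ.1)
    rw [neg_mul, abs_neg, abs_mul, abs_of_pos hω,
      abs_of_nonneg (Real.rpow_nonneg (sub_nonneg.2 h1) _)]
    rw [hXdef]
    exact mul_le_mul_of_nonneg_left (Real.rpow_le_rpow (sub_nonneg.2 h1) h2 hp.le) hω.le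
  have hMLbound : ∀ ℓ ∈ Icc a b, ∀ ρ ∈ Icc a ℓ,
      |mittagLeffler (μ - κ) μ (-ω * (Φ ℓ - Φ ρ) ^ (μ - κ))| ≤ C :=
    fun ℓ hℓ ρ hρ => ml_abs_le hp hμ0 hX (heX ℓ hℓ ρ hρ)
  -- kernel integrability and value
  have hker : ∀ t ℓ : ℝ, a ≤ t → t ≤ ℓ → ℓ ≤ b →
      IntegrableOn (fun ρ => Φ' ρ * (Φ ℓ - Φ ρ) ^ (μ - 1)) (Ioc t ℓ) ∧
      (∫ ρ in t..ℓ, Φ' ρ * (Φ ℓ - Φ ρ) ^ (μ - 1)) = (Φ ℓ - Φ t) ^ μ / μ := by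
    intro t ℓ hat htℓ hℓb
    have htI : t ∈ Icc a b := ⟨hat, htℓ.trans hℓb⟩
    have hℓI : ℓ ∈ Icc a b := ⟨hat.trans htℓ, hℓb⟩
    have hsub : Icc t ℓ ⊆ Icc a b := Icc_subset_Icc hat hℓb
    have hg0c : ContinuousOn (fun ρ => -((Φ ℓ - Φ ρ) ^ μ / μ)) (Icc t ℓ) := by
      apply ContinuousOn.neg
      apply ContinuousOn.div_const
      intro ρ hρ
      exact (Real.continuousAt_rpow_const _ _ (Or.inr hμ0.le)).comp_continuousWithinAt
        ((continuousOn_const.sub (hΦc.mono hsub)) ρ hρ)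
    have hderiv : ∀ ρ ∈ Ioo t ℓ, HasDerivAt (fun ρ => -((Φ ℓ - Φ ρ) ^ μ / μ))
        (Φ' ρ * (Φ ℓ - Φ ρ) ^ (μ - 1)) ρ := by
      intro ρ hρ
      have hρI : ρ ∈ Icc a b := hsub (Ioo_subset_Icc_self hρ)
      have hpos : 0 < Φ ℓ - Φ ρ := sub_pos.2 (hΦmono hρI hℓI hρ.2)
      have h1 : HasDerivAt (fun ρ => Φ ℓ - Φ ρ) (-Φ' ρ) ρ := by
        have h0 := (hasDerivAt_const ρ (Φ ℓ)).sub (hΦd ρ hρI); rw [zero_sub] at h0; exact h0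
      have h2 : HasDerivAt (fun y : ℝ => y ^ μ) (μ * (Φ ℓ - Φ ρ) ^ (μ - 1)) (Φ ℓ - Φ ρ) :=
        Real.hasDerivAt_rpow_const (Or.inl hpos.ne')
      have h3 := ((h2.comp ρ h1).div_const μ).neg
      refine h3.congr_deriv ?_
      rw [neg_eq_iff_eq_neg, div_eq_iff hμ0.ne']
      ring
    have hnn : ∀ ρ ∈ Ioo t ℓ, 0 ≤ Φ' ρ * (Φ ℓ - Φ ρ) ^ (μ - 1) := by
      intro ρ hρ
      have hρI : ρ ∈ Icc a b := hsub (Ioo_subset_Icc_self hρ)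
      exact mul_nonneg (hΦ'pos ρ hρI).le
        (Real.rpow_nonneg (sub_nonneg.2 (hΦle hρI hℓI hρ.2.le)) _)
    have hint := intervalIntegral.integrableOn_deriv_of_nonneg hg0c hderiv hnn
    refine ⟨hint, ?_⟩
    have hii : IntervalIntegrable (fun ρ => Φ' ρ * (Φ ℓ - Φ ρ) ^ (μ - 1)) volume t ℓ :=
      (intervalIntegrable_iff_integrableOn_Ioc_of_le htℓ).2 hint
    rw [intervalIntegral.integral_eq_sub_of_hasDeriv_right_of_le htℓ hg0c
      (fun ρ hρ => (hderiv ρ hρ).hasDerivWithinAt) hii]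
    simp [sub_self, Real.zero_rpow hμ0.ne']
  -- integrability of the full integrand
  have hGint : ∀ ℓ ∈ Icc a b, ∀ v : ℝ → ℝ, ContinuousOn v (Icc a b) →
      IntervalIntegrable (fun ρ => Φ' ρ * (Φ ℓ - Φ ρ) ^ (μ - 1) *
        mittagLeffler (μ - κ) μ (-ω * (Φ ℓ - Φ ρ) ^ (μ - κ)) * v ρ) volume a ℓ := by
    intro ℓ hℓ v hvc
    have hsub : Icc a ℓ ⊆ Icc a b := Icc_subset_Icc le_rfl hℓ.2
    have hIoosub : Ioo a ℓ ⊆ Icc a b := fun ρ hρ => hsub (Ioo_subset_Icc_self hρ)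
    obtain ⟨Bv, hBv⟩ := IsCompact.exists_bound_of_continuousOn isCompact_Icc hvc
    set f := fun ρ => Φ' ρ * (Φ ℓ - Φ ρ) ^ (μ - 1) *
      mittagLeffler (μ - κ) μ (-ω * (Φ ℓ - Φ ρ) ^ (μ - κ)) * v ρ with hfdef
    have hbase : ContinuousOn (fun ρ => Φ ℓ - Φ ρ) (Ioo a ℓ) :=
      continuousOn_const.sub (hΦc.mono hIoosub)
    have hfc : ContinuousOn f (Ioo a ℓ) := by
      have h1 : ContinuousOn (fun ρ => (Φ ℓ - Φ ρ) ^ (μ - 1)) (Ioo a ℓ) := by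
        intro ρ hρ
        have hpos : 0 < Φ ℓ - Φ ρ := sub_pos.2 (hΦmono (hIoosub hρ) hℓ hρ.2)
        exact (hbase ρ hρ).rpow_const (Or.inl hpos.ne')
      have h2 : ContinuousOn
          (fun ρ => mittagLeffler (μ - κ) μ (-ω * (Φ ℓ - Φ ρ) ^ (μ - κ))) (Ioo a ℓ) := by
        apply (ml_continuousOn hp hμ0 hX).comp
          (continuousOn_const.mul (hbase.rpow_const (fun ρ hρ => Or.inr hp.le)))
        intro ρ hρ
        have := heX ℓ hℓ ρ ⟨hρ.1.le, hρ.2.le⟩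
        exact abs_le.mp this |> fun h => ⟨h.1, h.2⟩
      exact (((hΦ'c.mono hIoosub).mul h1).mul h2).mul (hvc.mono hIoosub)
    rw [intervalIntegrable_iff_integrableOn_Ioc_of_le hℓ.1, integrableOn_Ioc_iff_integrableOn_Ioo]
    have hmeas : AEStronglyMeasurable f (volume.restrict (Ioo a ℓ)) :=
      (hfc.aemeasurable measurableSet_Ioo).aestronglyMeasurable
    apply MeasureTheory.Integrable.mono'
      (g := fun ρ => (C * Bv) * (Φ' ρ * (Φ ℓ - Φ ρ) ^ (μ - 1)))
      (((hker a ℓ le_rfl hℓ.1 hℓ.2).1.mono_set Ioo_subset_Ioc_self).const_mul _) hmeas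
    refine (ae_restrict_iff' measurableSet_Ioo).2 (Filter.Eventually.of_forall ?_)
    intro ρ hρ
    have hρI : ρ ∈ Icc a b := hIoosub hρ
    have hk0 : 0 ≤ Φ' ρ * (Φ ℓ - Φ ρ) ^ (μ - 1) :=
      mul_nonneg (hΦ'pos ρ hρI).le
        (Real.rpow_nonneg (sub_nonneg.2 (hΦle hρI hℓ hρ.2.le)) _)
    have h1 : |mittagLeffler (μ - κ) μ (-ω * (Φ ℓ - Φ ρ) ^ (μ - κ))| ≤ C :=
      hMLbound ℓ hℓ ρ ⟨hρ.1.le, hρ.2.le⟩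
    have h2 : |v ρ| ≤ Bv := by
      have := hBv ρ hρI; rwa [Real.norm_eq_abs] at this
    have heq : ‖f ρ‖ = Φ' ρ * (Φ ℓ - Φ ρ) ^ (μ - 1) *
        |mittagLeffler (μ - κ) μ (-ω * (Φ ℓ - Φ ρ) ^ (μ - κ))| * |v ρ| := by
      rw [hfdef, Real.norm_eq_abs, abs_mul, abs_mul, abs_of_nonneg hk0]
    rw [heq]
    calc Φ' ρ * (Φ ℓ - Φ ρ) ^ (μ - 1) *
        |mittagLeffler (μ - κ) μ (-ω * (Φ ℓ - Φ ρ) ^ (μ - κ))| * |v ρ|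
        ≤ Φ' ρ * (Φ ℓ - Φ ρ) ^ (μ - 1) * C * Bv := by
          apply mul_le_mul (mul_le_mul_of_nonneg_left h1 hk0) h2 (abs_nonneg _)
            (mul_nonneg hk0 hC0)
      _ = C * Bv * (Φ' ρ * (Φ ℓ - Φ ρ) ^ (μ - 1)) := by ring
  -- z a = zb a
  have hza : z a = zb a := by
    have h1 := hz a haI
    have h2 := hzb a haI
    rw [intervalIntegral.integral_same] at h1 h2
    rw [h1, h2]
  -- the Lipschitz-type bound on F differences
  have hFd : ∀ ρ ∈ Icc a b, |F ρ (z ρ) - F ρ (zb ρ)| ≤ M * |z ρ - zb ρ| := by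
    intro ρ hρ
    rcases le_total (z ρ) (zb ρ) with h | h
    · have hh := hF ρ hρ (z ρ) (zb ρ) (hzsec ρ hρ).1 h (hzbsec ρ hρ).2
      rw [abs_sub_comm, abs_of_nonneg hh.1, abs_sub_comm (z ρ),
        abs_of_nonneg (sub_nonneg.2 h)]
      exact hh.2
    · have hh := hF ρ hρ (zb ρ) (z ρ) (hzbsec ρ hρ).1 h (hzsec ρ hρ).2
      rw [abs_of_nonneg hh.1, abs_of_nonneg (sub_nonneg.2 h)]
      exact hh.2
  -- continuity of composite maps
  have hFzc : ContinuousOn (fun ρ => F ρ (z ρ)) (Icc a b) :=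
    hFc.comp (f := fun ρ => (ρ, z ρ)) (continuousOn_id.prodMk hzc) (fun x hx => ⟨hx, mem_univ _⟩)
  have hFzbc : ContinuousOn (fun ρ => F ρ (zb ρ)) (Icc a b) :=
    hFc.comp (f := fun ρ => (ρ, zb ρ)) (continuousOn_id.prodMk hzbc) (fun x hx => ⟨hx, mem_univ _⟩)
  -- key extension step
  have key : ∀ t, t ∈ Icc a b → t < b → (∀ s ∈ Icc a t, z s = zb s) →
      ∃ ℓ', t < ℓ' ∧ ℓ' ≤ b ∧ ∀ s ∈ Icc t ℓ', z s = zb s := by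
    intro t htI htb hteq
    set D := M * C with hDdef
    have hD0 : 0 ≤ D := mul_nonneg hM hC0
    set ε := (μ / (2 * (D + 1))) ^ (1/μ) with hεdef
    have hεpos : 0 < ε := Real.rpow_pos_of_pos (by positivity) _
    obtain ⟨δ, hδpos, hδ⟩ := Metric.continuousAt_iff.1 (hΦd t htI).continuousAt ε hεpos
    set ℓ' := min (t + δ/2) b with hℓ'def
    have htℓ' : t < ℓ' := lt_min (by linarith) htb
    have hℓ'b : ℓ' ≤ b := min_le_right _ _
    have hℓ'I : ℓ' ∈ Icc a b := ⟨htI.1.trans htℓ'.le, hℓ'b⟩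
    have hΦℓ' : Φ ℓ' - Φ t < ε := by
      have h1 : dist ℓ' t < δ := by
        rw [Real.dist_eq, abs_of_nonneg (by linarith [htℓ'.le] : (0:ℝ) ≤ ℓ' - t)]
        have h2 : ℓ' ≤ t + δ/2 := min_le_left _ _
        linarith
      have h3 := hδ h1
      rw [Real.dist_eq] at h3
      calc Φ ℓ' - Φ t ≤ |Φ ℓ' - Φ t| := le_abs_self _
        _ < ε := h3
    have hεμ : ε ^ μ = μ / (2 * (D + 1)) := by
      rw [hεdef, ← Real.rpow_mul (le_of_lt (by positivity)), one_div,
        inv_mul_cancel₀ hμ0.ne', Real.rpow_one]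
    have hsmall : ∀ ℓ ∈ Icc t ℓ', D * ((Φ ℓ - Φ t) ^ μ / μ) ≤ 1/2 := by
      intro ℓ hℓ
      have hℓI : ℓ ∈ Icc a b := ⟨htI.1.trans hℓ.1, hℓ.2.trans hℓ'b⟩
      have h0 : 0 ≤ Φ ℓ - Φ t := sub_nonneg.2 (hΦle htI hℓI hℓ.1)
      have h1 : Φ ℓ - Φ t < ε := by
        have := hΦle hℓI hℓ'I hℓ.2
        linarith
      have h2 : (Φ ℓ - Φ t) ^ μ ≤ ε ^ μ := Real.rpow_le_rpow h0 h1.le hμ0.le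
      calc D * ((Φ ℓ - Φ t) ^ μ / μ) ≤ D * (ε ^ μ / μ) := by gcongr
        _ = D / (2 * (D + 1)) := by rw [hεμ]; field_simp
        _ ≤ 1/2 := by rw [div_le_iff₀ (by positivity)]; linarith
    -- supremum over the small interval
    set W := sSup ((fun s => |z s - zb s|) '' Icc t ℓ') with hWdef
    have hIccsub : Icc t ℓ' ⊆ Icc a b := Icc_subset_Icc htI.1 hℓ'b
    have hwc : ContinuousOn (fun s => |z s - zb s|) (Icc t ℓ') :=
      ((hzc.mono hIccsub).sub (hzbc.mono hIccsub)).abs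
    have hne : ((fun s => |z s - zb s|) '' Icc t ℓ').Nonempty :=
      ⟨_, mem_image_of_mem _ (left_mem_Icc.2 htℓ'.le)⟩
    have hbdd : BddAbove ((fun s => |z s - zb s|) '' Icc t ℓ') :=
      (isCompact_Icc.image_of_continuousOn hwc).bddAbove
    have hWle : ∀ s ∈ Icc t ℓ', |z s - zb s| ≤ W :=
      fun s hs => le_csSup hbdd (mem_image_of_mem _ hs)
    have hW0 : 0 ≤ W := le_trans (abs_nonneg _) (hWle t (left_mem_Icc.2 htℓ'.le))
    -- the main estimate
    have hest : ∀ ℓ ∈ Icc t ℓ', |z ℓ - zb ℓ| ≤ D * ((Φ ℓ - Φ t) ^ μ / μ) * W := by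
      intro ℓ hℓmem
      have htℓ : t ≤ ℓ := hℓmem.1
      have hℓI : ℓ ∈ Icc a b := ⟨htI.1.trans htℓ, hℓmem.2.trans hℓ'b⟩
      have haℓ : a ≤ ℓ := hℓI.1
      have hint1 := hGint ℓ hℓI _ hFzc
      have hint2 := hGint ℓ hℓI _ hFzbc
      have hintΔ := hGint ℓ hℓI _ (hFzc.sub hFzbc)
      have hdiff : z ℓ - zb ℓ = ∫ ρ in a..ℓ,
          Φ' ρ * (Φ ℓ - Φ ρ) ^ (μ - 1) *
            mittagLeffler (μ - κ) μ (-ω * (Φ ℓ - Φ ρ) ^ (μ - κ)) *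
            (F ρ (z ρ) - F ρ (zb ρ)) := by
        rw [hz ℓ hℓI, hzb ℓ hℓI, add_sub_add_left_eq_sub,
          ← intervalIntegral.integral_sub hint1 hint2]
        apply intervalIntegral.integral_congr
        intro ρ _
        simp only
        ring
      have hmono1 : IntervalIntegrable (fun ρ =>
          Φ' ρ * (Φ ℓ - Φ ρ) ^ (μ - 1) *
            mittagLeffler (μ - κ) μ (-ω * (Φ ℓ - Φ ρ) ^ (μ - κ)) *
            (F ρ (z ρ) - F ρ (zb ρ))) volume a t :=
        hintΔ.mono_set (by
          rw [uIcc_of_le htI.1, uIcc_of_le haℓ]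
          exact Icc_subset_Icc_right htℓ)
      have hmono2 : IntervalIntegrable (fun ρ =>
          Φ' ρ * (Φ ℓ - Φ ρ) ^ (μ - 1) *
            mittagLeffler (μ - κ) μ (-ω * (Φ ℓ - Φ ρ) ^ (μ - κ)) *
            (F ρ (z ρ) - F ρ (zb ρ))) volume t ℓ :=
        hintΔ.mono_set (by
          rw [uIcc_of_le htℓ, uIcc_of_le haℓ]
          exact Icc_subset_Icc_left htI.1)
      have hsplit := intervalIntegral.integral_add_adjacent_intervals hmono1 hmono2
      have hzero : (∫ ρ in a..t,
          Φ' ρ * (Φ ℓ - Φ ρ) ^ (μ - 1) *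
            mittagLeffler (μ - κ) μ (-ω * (Φ ℓ - Φ ρ) ^ (μ - κ)) *
            (F ρ (z ρ) - F ρ (zb ρ))) = 0 := by
        have heqz : EqOn (fun ρ =>
            Φ' ρ * (Φ ℓ - Φ ρ) ^ (μ - 1) *
              mittagLeffler (μ - κ) μ (-ω * (Φ ℓ - Φ ρ) ^ (μ - κ)) *
              (F ρ (z ρ) - F ρ (zb ρ))) (fun _ => (0:ℝ)) (uIcc a t) := by
          intro s hs
          rw [uIcc_of_le htI.1] at hs
          simp only
          rw [hteq s hs]
          ring
        rw [intervalIntegral.integral_congr heqz, intervalIntegral.integral_zero]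
      have heqint : z ℓ - zb ℓ = ∫ ρ in t..ℓ,
          Φ' ρ * (Φ ℓ - Φ ρ) ^ (μ - 1) *
            mittagLeffler (μ - κ) μ (-ω * (Φ ℓ - Φ ρ) ^ (μ - κ)) *
            (F ρ (z ρ) - F ρ (zb ρ)) := by
        rw [hdiff, ← hsplit, hzero, zero_add]
      have hkii : IntervalIntegrable (fun ρ => Φ' ρ * (Φ ℓ - Φ ρ) ^ (μ - 1)) volume t ℓ :=
        (intervalIntegrable_iff_integrableOn_Ioc_of_le htℓ).2 (hker t ℓ htI.1 htℓ hℓI.2).1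
      have hmonoint : (∫ ρ in t..ℓ, |Φ' ρ * (Φ ℓ - Φ ρ) ^ (μ - 1) *
            mittagLeffler (μ - κ) μ (-ω * (Φ ℓ - Φ ρ) ^ (μ - κ)) *
            (F ρ (z ρ) - F ρ (zb ρ))|)
          ≤ ∫ ρ in t..ℓ, (M * C * W) * (Φ' ρ * (Φ ℓ - Φ ρ) ^ (μ - 1)) := by
        apply intervalIntegral.integral_mono_on htℓ hmono2.abs (hkii.const_mul _)
        intro s hs
        have hsI : s ∈ Icc a b := ⟨htI.1.trans hs.1, hs.2.trans hℓI.2⟩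
        have hk0 : 0 ≤ Φ' s * (Φ ℓ - Φ s) ^ (μ - 1) :=
          mul_nonneg (hΦ'pos s hsI).le
            (Real.rpow_nonneg (sub_nonneg.2 (hΦle hsI hℓI hs.2)) _)
        have h1 : |mittagLeffler (μ - κ) μ (-ω * (Φ ℓ - Φ s) ^ (μ - κ))| ≤ C :=
          hMLbound ℓ hℓI s ⟨hsI.1, hs.2⟩
        have h2 : |F s (z s) - F s (zb s)| ≤ M * |z s - zb s| := hFd s hsI
        have h3 : |z s - zb s| ≤ W := hWle s ⟨hs.1, hs.2.trans hℓmem.2⟩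
        calc |Φ' s * (Φ ℓ - Φ s) ^ (μ - 1) *
              mittagLeffler (μ - κ) μ (-ω * (Φ ℓ - Φ s) ^ (μ - κ)) *
              (F s (z s) - F s (zb s))|
            = Φ' s * (Φ ℓ - Φ s) ^ (μ - 1) *
              |mittagLeffler (μ - κ) μ (-ω * (Φ ℓ - Φ s) ^ (μ - κ))| *
              |F s (z s) - F s (zb s)| := by
              rw [abs_mul, abs_mul, abs_of_nonneg hk0]
          _ ≤ Φ' s * (Φ ℓ - Φ s) ^ (μ - 1) * C * (M * W) := by
              apply mul_le_mul (mul_le_mul_of_nonneg_left h1 hk0)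
                (h2.trans (mul_le_mul_of_nonneg_left h3 hM)) (abs_nonneg _)
                (mul_nonneg hk0 hC0)
          _ = (M * C * W) * (Φ' s * (Φ ℓ - Φ s) ^ (μ - 1)) := by ring
      have hval : (∫ ρ in t..ℓ, (M * C * W) * (Φ' ρ * (Φ ℓ - Φ ρ) ^ (μ - 1)))
          = (M * C * W) * ((Φ ℓ - Φ t) ^ μ / μ) := by
        rw [intervalIntegral.integral_const_mul, (hker t ℓ htI.1 htℓ hℓI.2).2]
      calc |z ℓ - zb ℓ| = |∫ ρ in t..ℓ,
            Φ' ρ * (Φ ℓ - Φ ρ) ^ (μ - 1) *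
              mittagLeffler (μ - κ) μ (-ω * (Φ ℓ - Φ ρ) ^ (μ - κ)) *
              (F ρ (z ρ) - F ρ (zb ρ))| := by rw [heqint]
        _ ≤ ∫ ρ in t..ℓ, |Φ' ρ * (Φ ℓ - Φ ρ) ^ (μ - 1) *
              mittagLeffler (μ - κ) μ (-ω * (Φ ℓ - Φ ρ) ^ (μ - κ)) *
              (F ρ (z ρ) - F ρ (zb ρ))| :=
            intervalIntegral.abs_integral_le_integral_abs htℓ
        _ ≤ (M * C * W) * ((Φ ℓ - Φ t) ^ μ / μ) := hval ▸ hmonoint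
        _ = D * ((Φ ℓ - Φ t) ^ μ / μ) * W := by rw [hDdef]; ring
    -- conclude W = 0
    have hWhalf : W ≤ 1/2 * W := by
      apply csSup_le hne
      rintro x ⟨s, hs, rfl⟩
      calc |z s - zb s| ≤ D * ((Φ s - Φ t) ^ μ / μ) * W := hest s hs
        _ ≤ 1/2 * W := mul_le_mul_of_nonneg_right (hsmall s hs) hW0
    have hW : W = 0 := le_antisymm (by linarith) hW0
    refine ⟨ℓ', htℓ', hℓ'b, fun s hs => ?_⟩
    have h4 := hWle s hs
    rw [hW] at h4
    have h5 : |z s - zb s| = 0 := le_antisymm h4 (abs_nonneg _)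
    have := abs_eq_zero.mp h5
    linarith [this]
  -- supremum argument
  set S := {t : ℝ | t ∈ Icc a b ∧ ∀ s ∈ Icc a t, z s = zb s} with hSdef
  have haS : a ∈ S := ⟨haI, fun s hs => by
    have hsa : s = a := le_antisymm hs.2 hs.1
    rw [hsa]; exact hza⟩
  have hSb : BddAbove S := ⟨b, fun t ht => ht.1.2⟩
  have hSne : S.Nonempty := ⟨a, haS⟩
  set T := sSup S with hTdef
  have haT : a ≤ T := le_csSup hSb haS
  have hTb : T ≤ b := csSup_le hSne (fun t ht => ht.1.2)
  have hTI : T ∈ Icc a b := ⟨haT, hTb⟩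
  have hlt_case : ∀ s, a ≤ s → s < T → z s = zb s := by
    intro s has hsT
    obtain ⟨t, htS, hst⟩ := exists_lt_of_lt_csSup hSne hsT
    exact htS.2 s ⟨has, hst.le⟩
  have hTall : ∀ s ∈ Icc a T, z s = zb s := by
    intro s hs
    rcases eq_or_lt_of_le hs.2 with heq | hlt
    · rcases eq_or_lt_of_le haT with haT' | haT'
      · rw [show s = a by rw [heq, ← haT'], hza]
      · -- continuity argument: T is in the closure of Ico a T
        have hcont : ContinuousOn (fun x => z x - zb x) (Icc a b) := hzc.sub hzbc
        have hEc : IsClosed (Icc a b ∩ (fun x => z x - zb x) ⁻¹' {0}) :=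
          hcont.preimage_isClosed_of_isClosed isClosed_Icc isClosed_singleton
        have hsubE : Ico a T ⊆ Icc a b ∩ (fun x => z x - zb x) ⁻¹' {0} := by
          intro x hx
          refine ⟨⟨hx.1, hx.2.le.trans hTb⟩, ?_⟩
          have := hlt_case x hx.1 hx.2
          simp [this]
        have hTcl : T ∈ closure (Ico a T) := by
          rw [closure_Ico haT'.ne]
          exact right_mem_Icc.2 haT
        have hTE : T ∈ Icc a b ∩ (fun x => z x - zb x) ⁻¹' {0} :=
          hEc.closure_subset ((closure_mono hsubE) hTcl)
        have h0 : z T - zb T = 0 := hTE.2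
        rw [heq]
        linarith
    · exact hlt_case s hs.1 hlt
  rcases eq_or_lt_of_le hTb with hTb' | hTb'
  · intro ℓ hℓ
    exact hTall ℓ ⟨hℓ.1, hTb' ▸ hℓ.2⟩
  · exfalso
    obtain ⟨ℓ', hℓ'1, hℓ'2, hℓ'3⟩ := key T hTI hTb' hTall
    have hℓ'S : ℓ' ∈ S := by
      refine ⟨⟨haT.trans hℓ'1.le, hℓ'2⟩, fun s hs => ?_⟩
      rcases le_total s T with h | h
      · exact hTall s ⟨hs.1, h⟩
      · exact hℓ'3 s ⟨h, hs.2⟩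
    have := le_csSup hSb hℓ'S
    linarith
end
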